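/- arXiv:1211.0246 — 8 statements merged into one kernel-verified Lean document; each statement's English description precedes it below -/
import Mathlib

section
/- A permutation σ of {1,...,n} is indecomposable if and only if its permutation graph G_σ (with vertex set {1,...,n} and edges {a,b} whenever (a,b) is an inversion of σ, i.e., a < b and σ⁻¹(a) > σ⁻¹(b)) is connected. -/
/-- The permutation graph of `σ`: vertices `Fin n`, with an edge between `a` and `b`
iff the pair of values is an inversion of `σ`, i.e. the smaller one appears after the
larger one in one-line notation (`σ⁻¹` of the smaller exceeds `σ⁻¹` of the larger). -/
def permGraph {n : ℕ} (σ : Equiv.Perm (Fin n)) : SimpleGraph (Fin n) where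
  Adj a b := (a < b ∧ σ.symm b < σ.symm a) ∨ (b < a ∧ σ.symm a < σ.symm b)
  symm := by
    constructor
    intro a b h
    rcases h with ⟨h1, h2⟩ | ⟨h1, h2⟩
    · exact Or.inr ⟨h1, h2⟩
    · exact Or.inl ⟨h1, h2⟩
  loopless := by
    constructor
    intro a h
    rcases h with ⟨h1, _⟩ | ⟨h1, _⟩ <;> exact lt_irrefl _ h1

/-- `σ` is indecomposable: there is no `k` with `0 < k < n` such that `σ` maps the
first `k` positions onto the first `k` values. -/
def Indecomposable {n : ℕ} (σ : Equiv.Perm (Fin n)) : Prop :=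
  ¬ ∃ k : ℕ, 0 < k ∧ k < n ∧ ∀ i : Fin n, (i : ℕ) < k → (σ i : ℕ) < k

lemma permGraph_adj_iff {n : ℕ} (σ : Equiv.Perm (Fin n)) (a b : Fin n) :
    (permGraph σ).Adj a b ↔
      ((a : ℕ) < b ∧ ((σ.symm b : ℕ)) < (σ.symm a : ℕ)) ∨
      ((b : ℕ) < a ∧ ((σ.symm a : ℕ)) < (σ.symm b : ℕ)) := Iff.rfl

lemma symm_val_eq_iff {n : ℕ} (σ : Equiv.Perm (Fin n)) (a b : Fin n) :
    ((σ.symm a : ℕ) = (σ.symm b : ℕ)) ↔ (a : ℕ) = (b : ℕ) := by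
  constructor
  · intro h
    exact congrArg Fin.val (σ.symm.injective (Fin.val_injective h))
  · intro h
    exact congrArg (fun x => ((σ.symm x : ℕ))) (Fin.val_injective h)

lemma adj_step_val {n : ℕ} (σ : Equiv.Perm (Fin n)) {a x b : Fin n}
    (h : (permGraph σ).Adj a x)
    (hb : ((a : ℕ) < b ∧ (b : ℕ) < x) ∨ ((x : ℕ) < b ∧ (b : ℕ) < a)) :
    (permGraph σ).Adj b a ∨ (permGraph σ).Adj b x := by
  rw [permGraph_adj_iff] at h
  rw [permGraph_adj_iff, permGraph_adj_iff]
  have e1 := symm_val_eq_iff σ a b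
  have e2 := symm_val_eq_iff σ b x
  omega

lemma adj_step_pos {n : ℕ} (σ : Equiv.Perm (Fin n)) {a x b : Fin n}
    (h : (permGraph σ).Adj a x)
    (hb : ((σ.symm a : ℕ) < σ.symm b ∧ (σ.symm b : ℕ) < σ.symm x) ∨
          ((σ.symm x : ℕ) < σ.symm b ∧ (σ.symm b : ℕ) < σ.symm a)) :
    (permGraph σ).Adj b a ∨ (permGraph σ).Adj b x := by
  rw [permGraph_adj_iff] at h
  rw [permGraph_adj_iff, permGraph_adj_iff]
  have e1 := symm_val_eq_iff σ a b
  have e2 := symm_val_eq_iff σ b x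
  omega

lemma reachable_of_between_val {n : ℕ} (σ : Equiv.Perm (Fin n)) {a c : Fin n}
    (w : (permGraph σ).Walk a c) (b : Fin n)
    (hb : ((a : ℕ) < b ∧ (b : ℕ) < c) ∨ ((c : ℕ) < b ∧ (b : ℕ) < a)) :
    (permGraph σ).Reachable b a := by
  induction w with
  | nil => omega
  | @cons a x c h w ih =>
    by_cases hbx : b = x
    · subst hbx; exact h.symm.reachable
    · have hbx' : (b : ℕ) ≠ (x : ℕ) := fun he => hbx (Fin.val_injective he)
      by_cases hb2 : ((x : ℕ) < b ∧ (b : ℕ) < c) ∨ ((c : ℕ) < b ∧ (b : ℕ) < x)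
      · exact (ih hb2).trans h.symm.reachable
      · have hb3 : ((a : ℕ) < b ∧ (b : ℕ) < x) ∨ ((x : ℕ) < b ∧ (b : ℕ) < a) := by omega
        rcases adj_step_val σ h hb3 with h' | h'
        · exact h'.reachable
        · exact h'.reachable.trans h.symm.reachable

lemma reachable_of_between_pos {n : ℕ} (σ : Equiv.Perm (Fin n)) {a c : Fin n}
    (w : (permGraph σ).Walk a c) (b : Fin n)
    (hb : ((σ.symm a : ℕ) < σ.symm b ∧ (σ.symm b : ℕ) < σ.symm c) ∨
          ((σ.symm c : ℕ) < σ.symm b ∧ (σ.symm b : ℕ) < σ.symm a)) :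
    (permGraph σ).Reachable b a := by
  induction w with
  | nil => omega
  | @cons a x c h w ih =>
    by_cases hbx : b = x
    · subst hbx; exact h.symm.reachable
    · have hbx' : ((σ.symm b : ℕ)) ≠ ((σ.symm x : ℕ)) := fun he =>
        hbx (σ.symm.injective (Fin.val_injective he))
      by_cases hb2 : ((σ.symm x : ℕ) < σ.symm b ∧ (σ.symm b : ℕ) < σ.symm c) ∨
          ((σ.symm c : ℕ) < σ.symm b ∧ (σ.symm b : ℕ) < σ.symm x)
      · exact (ih hb2).trans h.symm.reachable
      · have hb3 : ((σ.symm a : ℕ) < σ.symm b ∧ (σ.symm b : ℕ) < σ.symm x) ∨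
            ((σ.symm x : ℕ) < σ.symm b ∧ (σ.symm b : ℕ) < σ.symm a) := by omega
        rcases adj_step_pos σ h hb3 with h' | h'
        · exact h'.reachable
        · exact h'.reachable.trans h.symm.reachable

lemma mem_iff_lt_card {n : ℕ} (C : Finset (Fin n))
    (hdc : ∀ v ∈ C, ∀ u, u ≤ v → u ∈ C) (v : Fin n) :
    v ∈ C ↔ (v : ℕ) < C.card := by
  constructor
  · intro hv
    have hsub : Finset.Iic v ⊆ C := fun u hu => hdc v hv u (Finset.mem_Iic.mp hu)
    have := Finset.card_le_card hsub
    rw [Fin.card_Iic] at this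
    omega
  · intro hv
    by_contra hvc
    have hsub : C ⊆ Finset.Iio v := by
      intro u hu
      rw [Finset.mem_Iio]
      by_contra hlt
      exact hvc (hdc u hu v (le_of_not_gt hlt))
    have := Finset.card_le_card hsub
    rw [Fin.card_Iio] at this
    omega

/-- A permutation of `[n]` is indecomposable iff its permutation graph is connected. -/
theorem indecomposable_iff_permGraph_connected (n : ℕ) (hn : 0 < n)
    (σ : Equiv.Perm (Fin n)) :
    Indecomposable σ ↔ (permGraph σ).Connected := by
  classical
  constructor
  · intro hind
    set G := permGraph σ with hG
    set v0 : Fin n := ⟨0, hn⟩ with hv0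
    set C : Finset (Fin n) := Finset.univ.filter (fun v => G.Reachable v0 v) with hC
    have hmemC : ∀ v, v ∈ C ↔ G.Reachable v0 v := by
      intro v; simp [hC]
    -- C downward closed
    have hdc : ∀ v ∈ C, ∀ u, u ≤ v → u ∈ C := by
      intro v hv u hu
      rw [hmemC] at hv ⊢
      rcases eq_or_lt_of_le hu with rfl | hlt
      · exact hv
      · rcases Nat.eq_zero_or_pos (u : ℕ) with h0 | h0
        · have : u = v0 := Fin.val_injective (by simp [hv0, h0])
          subst this; exact SimpleGraph.Reachable.refl v0
        · obtain ⟨w⟩ := hv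
          have h1 : ((v0 : ℕ) < u ∧ (u : ℕ) < v) ∨ ((v : ℕ) < u ∧ (u : ℕ) < v0) := by
            left; exact ⟨h0, hlt⟩
          exact (reachable_of_between_val σ w u h1).symm
    have hv0C : v0 ∈ C := (hmemC v0).mpr (SimpleGraph.Reachable.refl v0)
    have hCval : ∀ v, v ∈ C ↔ (v : ℕ) < C.card := mem_iff_lt_card C hdc
    -- positions
    set P : Finset (Fin n) := C.image σ.symm with hP
    have hcardP : P.card = C.card := Finset.card_image_of_injective C σ.symm.injective
    have hmemP : ∀ q : Fin n, q ∈ P ↔ σ q ∈ C := by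
      intro q
      constructor
      · intro hq
        obtain ⟨v, hv, hvq⟩ := Finset.mem_image.mp hq
        have : σ q = v := by rw [← hvq]; simp
        rwa [this]
      · intro hq
        exact Finset.mem_image.mpr ⟨σ q, hq, by simp⟩
    have hdcP : ∀ p ∈ P, ∀ q, q ≤ p → q ∈ P := by
      intro p hp q hq
      obtain ⟨v, hv, hvp⟩ := Finset.mem_image.mp hp
      rw [hmemP, hmemC]
      rcases eq_or_lt_of_le hq with rfl | hlt
      · have hqv : σ q = v := by rw [← hvp]; simp
        rw [hqv]
        exact (hmemC v).mp hv
      · -- q < p = σ.symm v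
        by_cases hq0 : σ q = v0
        · rw [hq0]
        · have hq0' : (0:ℕ) < (σ q : ℕ) := by
            rcases Nat.eq_zero_or_pos ((σ q : ℕ)) with h | h
            · exact absurd (Fin.val_injective (show ((σ q : ℕ)) = ((v0:ℕ)) by simp [hv0, h])) hq0
            · exact h
          rcases lt_trichotomy ((σ.symm v0 : ℕ)) (q : ℕ) with hc | hc | hc
          · -- between positions
            obtain ⟨w⟩ := (hmemC v).mp hv
            have hmid : ((σ.symm v0 : ℕ) < σ.symm (σ q) ∧ (σ.symm (σ q) : ℕ) < σ.symm v) ∨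
                ((σ.symm v : ℕ) < σ.symm (σ q) ∧ (σ.symm (σ q) : ℕ) < σ.symm v0) := by
              left
              simp only [Equiv.symm_apply_apply]
              exact ⟨hc, by rw [hvp]; exact hlt⟩
            exact (reachable_of_between_pos σ w (σ q) hmid).symm
          · have : σ q = v0 := by
              have : q = σ.symm v0 := Fin.val_injective hc.symm
              rw [this]; simp
            exact absurd this hq0
          · -- q before position of v0 : direct edge v0 - σ q
            have hadj : G.Adj v0 (σ q) := by
              rw [hG, permGraph_adj_iff]
              left
              constructor
              · simpa [hv0] using hq0'
              · simpa using hc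
            exact hadj.reachable
    have hPval : ∀ q : Fin n, q ∈ P ↔ (q : ℕ) < C.card := by
      intro q
      rw [mem_iff_lt_card P hdcP q, hcardP]
    -- use indecomposability
    have hkbig : ¬ C.card < n := by
      intro hlt
      apply hind
      refine ⟨C.card, ?_, hlt, ?_⟩
      · exact Finset.card_pos.mpr ⟨v0, hv0C⟩
      · intro i hi
        have : i ∈ P := (hPval i).mpr hi
        rw [hmemP] at this
        exact (hCval (σ i)).mp this
    have hcard : C.card = n := le_antisymm (by simpa using Finset.card_le_card (Finset.subset_univ C)) (le_of_not_gt hkbig)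
    have hall : ∀ v, G.Reachable v0 v := by
      intro v
      rw [← hmemC, hCval, hcard]
      exact v.isLt
    haveI : Nonempty (Fin n) := ⟨v0⟩
    exact ⟨fun u v => (hall u).symm.trans (hall v)⟩
  · rintro hconn ⟨k, hk0, hkn, hk⟩
    set G := permGraph σ with hG
    -- σ.symm also maps values < k to positions < k
    have hsurj : ∀ v : Fin n, (v : ℕ) < k → ((σ.symm v : ℕ)) < k := by
      intro v hv
      set A : Finset (Fin n) := Finset.univ.filter (fun i => (i : ℕ) < k) with hA
      have hsub : A.image σ ⊆ A := by
        intro u hu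
        obtain ⟨i, hi, hiu⟩ := Finset.mem_image.mp hu
        rw [hA, Finset.mem_filter] at hi ⊢
        exact ⟨Finset.mem_univ _, hiu ▸ hk i hi.2⟩
      have hcard : (A.image σ).card = A.card := Finset.card_image_of_injective A σ.injective
      have heq : A.image σ = A := Finset.eq_of_subset_of_card_le hsub (le_of_eq hcard.symm)
      have hvA : v ∈ A := by rw [hA, Finset.mem_filter]; exact ⟨Finset.mem_univ _, hv⟩
      rw [← heq] at hvA
      obtain ⟨i, hi, hiv⟩ := Finset.mem_image.mp hvA
      rw [hA, Finset.mem_filter] at hi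
      have : σ.symm v = i := by rw [← hiv]; simp
      rw [this]
      exact hi.2
    have key : ∀ (a b : Fin n), G.Adj a b → (a : ℕ) < k → (b : ℕ) < k := by
      intro a b hab ha
      rw [hG, permGraph_adj_iff] at hab
      rcases hab with ⟨h1, h2⟩ | ⟨h1, h2⟩
      · have hpa := hsurj a ha
        have hpb : ((σ.symm b : ℕ)) < k := by omega
        have := hk (σ.symm b) hpb
        simpa using this
      · omega
    have keyR : ∀ (a b : Fin n), G.Reachable a b → (a : ℕ) < k → (b : ℕ) < k := by
      intro a b ⟨w⟩ ha
      induction w with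
      | nil => exact ha
      | @cons a x c h w ih => exact ih (key a x h ha)
    have h1 : ((⟨0, hn⟩ : Fin n) : ℕ) < k := hk0
    have h2 := keyR _ ⟨k, hkn⟩ (hconn.preconnected _ _) h1
    simp at h2
end

section
/- The vertex set of every connected component of the permutation graph G_σ of a permutation σ of [n] is an interval of consecutive integers. -/
lemma permGraph_cross {n : ℕ} (σ : Equiv.Perm (Fin n)) {u v c : Fin n}
    (h : (permGraph σ).Adj u v) (h1 : u ≤ c) (h2 : c ≤ v) :
    (permGraph σ).Reachable u c := by
  rcases eq_or_lt_of_le h1 with rfl | h1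
  · exact SimpleGraph.Reachable.refl _
  rcases eq_or_lt_of_le h2 with rfl | h2
  · exact h.reachable
  have huv : u < v := lt_trans h1 h2
  have hinv : σ.symm v < σ.symm u := by
    rcases h with ⟨_, hi⟩ | ⟨hlt, _⟩
    · exact hi
    · exact absurd huv (not_lt.mpr hlt.le)
  rcases lt_or_ge (σ.symm c) (σ.symm u) with hc | hc
  · exact (SimpleGraph.Adj.reachable (Or.inl ⟨h1, hc⟩ : (permGraph σ).Adj u c))
  · have hvc : σ.symm v < σ.symm c := lt_of_lt_of_le hinv hc
    have : (permGraph σ).Adj c v := Or.inl ⟨h2, hvc⟩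
    exact h.reachable.trans this.symm.reachable

lemma permGraph_walk_reach {n : ℕ} (σ : Equiv.Perm (Fin n)) :
    ∀ {x y : Fin n}, (permGraph σ).Walk x y → ∀ c : Fin n,
      (x ≤ c ∧ c ≤ y) ∨ (y ≤ c ∧ c ≤ x) → (permGraph σ).Reachable x c := by
  intro x y w
  induction w with
  | nil =>
    intro c h
    rcases h with ⟨h1, h2⟩ | ⟨h1, h2⟩ <;>
      · have : c = _ := le_antisymm h2 h1
        subst this; exact SimpleGraph.Reachable.refl _
  | @cons x z y adj w ih =>
    intro c h
    by_cases hxz : (x ≤ c ∧ c ≤ z) ∨ (z ≤ c ∧ c ≤ x)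
    · rcases hxz with ⟨h1, h2⟩ | ⟨h1, h2⟩
      · exact permGraph_cross σ adj h1 h2
      · exact adj.reachable.trans (permGraph_cross σ adj.symm h1 h2)
    · have key : (z ≤ c ∧ c ≤ y) ∨ (y ≤ c ∧ c ≤ z) := by
        simp only [Fin.le_def, not_or, not_and, not_le] at h hxz ⊢
        omega
      exact adj.reachable.trans (ih c key)

/-- The vertex set of every connected component of a permutation graph is an interval
of consecutive integers: if `a ≤ c ≤ b` and `a, b` are in the same component, then so is `c`. -/
theorem permGraph_component_is_interval (n : ℕ) (σ : Equiv.Perm (Fin n))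
    (a b c : Fin n) (hac : a ≤ c) (hcb : c ≤ b)
    (hab : (permGraph σ).connectedComponentMk a = (permGraph σ).connectedComponentMk b) :
    (permGraph σ).connectedComponentMk c = (permGraph σ).connectedComponentMk a := by
  have hr : (permGraph σ).Reachable a b := SimpleGraph.ConnectedComponent.exact hab
  obtain ⟨w⟩ := hr
  have : (permGraph σ).Reachable a c :=
    permGraph_walk_reach σ w c (Or.inl ⟨hac, hcb⟩)
  exact (SimpleGraph.ConnectedComponent.sound this).symm
end

section
/- A permutation σ of [n] is decomposable at position k (i.e., σ({1,...,k}) = {1,...,k}) if and only if its inversion sequence x(σ) satisfies x_{k+i} ≤ i−1 for every i with 1 ≤ i ≤ n−k. -/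
/-- The inversion sequence of `σ`: `invSeq σ i` is the number of positions `j < i`
with `σ j > σ i`. -/
def invSeq {n : ℕ} (σ : Equiv.Perm (Fin n)) (i : Fin n) : ℕ :=
  (Finset.univ.filter (fun j : Fin n => j < i ∧ σ i < σ j)).card

lemma aux_card {n : ℕ} (k : ℕ) (hkn : k < n) (j : Fin n) :
    (Finset.univ.filter (fun j' : Fin n => k ≤ (j' : ℕ) ∧ (j' : ℕ) < (j : ℕ))).card
      = (j : ℕ) - k := by
  have h : (Finset.univ.filter (fun j' : Fin n => k ≤ (j' : ℕ) ∧ (j' : ℕ) < (j : ℕ)))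
      = Finset.Ico (⟨k, hkn⟩ : Fin n) j := by
    ext x
    simp only [Finset.mem_filter, Finset.mem_univ, true_and, Finset.mem_Ico, Fin.le_def, Fin.lt_def]
  rw [h, Fin.card_Ico]

lemma perm_closed {n k : ℕ} (σ : Equiv.Perm (Fin n))
    (h : ∀ i : Fin n, (i : ℕ) < k → (σ i : ℕ) < k) :
    ∀ i : Fin n, (σ i : ℕ) < k → (i : ℕ) < k := by
  set S := Finset.univ.filter (fun i : Fin n => (i : ℕ) < k) with hS
  have hsub : S.image σ ⊆ S := by
    intro x hx
    simp only [hS, Finset.mem_image, Finset.mem_filter, Finset.mem_univ, true_and] at hx ⊢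
    obtain ⟨i, hi, rfl⟩ := hx
    exact h i hi
  have heq : S.image σ = S :=
    Finset.eq_of_subset_of_card_le hsub
      (by rw [Finset.card_image_of_injective _ σ.injective])
  intro i hi
  have hmem : σ i ∈ S := by simp [hS, hi]
  rw [← heq, Finset.mem_image] at hmem
  obtain ⟨j, hj, hji⟩ := hmem
  have := σ.injective hji
  subst this
  simpa [hS] using hj

/-- `σ` is decomposable at position `k` (i.e. `σ({1,…,k}) = {1,…,k}`, 0-indexed:
the first `k` positions map onto the first `k` values) iff its inversion sequence
satisfies `x_{k+i} ≤ i-1` for `1 ≤ i ≤ n-k` (0-indexed: `x j ≤ j - k` for `j ≥ k`). -/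
theorem decomposable_iff_invSeq_tail (n k : ℕ) (hk : 0 < k) (hkn : k < n)
    (σ : Equiv.Perm (Fin n)) :
    (∀ i : Fin n, (i : ℕ) < k → (σ i : ℕ) < k) ↔
      (∀ j : Fin n, k ≤ (j : ℕ) → invSeq σ j ≤ (j : ℕ) - k) := by
  constructor
  · intro h j hj
    have h' : ∀ j' : Fin n, k ≤ (j' : ℕ) → k ≤ (σ j' : ℕ) := by
      intro j' hj'
      by_contra hlt
      push_neg at hlt
      exact absurd (perm_closed σ h j' hlt) (by omega)
    have hsub : (Finset.univ.filter (fun j' : Fin n => j' < j ∧ σ j < σ j'))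
        ⊆ (Finset.univ.filter (fun j' : Fin n => k ≤ (j' : ℕ) ∧ (j' : ℕ) < (j : ℕ))) := by
      intro x hx
      simp only [Finset.mem_filter, Finset.mem_univ, true_and] at hx ⊢
      obtain ⟨hxj, hσ⟩ := hx
      refine ⟨?_, hxj⟩
      by_contra hxk
      push_neg at hxk
      have h1 : (σ x : ℕ) < k := h x hxk
      have h2 : k ≤ (σ j : ℕ) := h' j hj
      have := (Fin.lt_def).mp hσ
      omega
    calc invSeq σ j ≤ _ := Finset.card_le_card hsub
      _ = (j : ℕ) - k := aux_card k hkn j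
  · intro h i hi
    by_contra hσi
    push_neg at hσi
    -- there is some j ≥ k with σ j < k
    have hex : ∃ j : Fin n, k ≤ (j : ℕ) ∧ (σ j : ℕ) < k := by
      by_contra hno
      push_neg at hno
      have h2 : ∀ j : Fin n, (σ j : ℕ) < k → (j : ℕ) < k := by
        intro j hjk
        by_contra hjk'
        push_neg at hjk'
        exact absurd hjk (by have := hno j hjk'; omega)
      have hsymm : ∀ x : Fin n, (x : ℕ) < k → (σ.symm x : ℕ) < k := by
        intro x hx
        apply h2
        simpa using hx
      have := perm_closed σ.symm hsymm (σ i) (by simpa using hi)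
      omega
    set T := Finset.univ.filter (fun j : Fin n => k ≤ (j : ℕ) ∧ (σ j : ℕ) < k) with hT
    have hne : T.Nonempty := by
      obtain ⟨j, hj1, hj2⟩ := hex
      exact ⟨j, by simp [hT, hj1, hj2]⟩
    set j0 := T.min' hne with hj0
    have hj0T : j0 ∈ T := T.min'_mem hne
    simp only [hT, Finset.mem_filter, Finset.mem_univ, true_and] at hj0T
    obtain ⟨hkj0, hσj0⟩ := hj0T
    have hmin : ∀ j ∈ T, j0 ≤ j := fun j hj => T.min'_le j hj
    -- build a large set of inversions at j0
    set B := insert i (Finset.univ.filter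
      (fun j' : Fin n => k ≤ (j' : ℕ) ∧ (j' : ℕ) < (j0 : ℕ))) with hB
    have hBsub : B ⊆ Finset.univ.filter (fun j' : Fin n => j' < j0 ∧ σ j0 < σ j') := by
      intro x hx
      simp only [hB, Finset.mem_insert, Finset.mem_filter, Finset.mem_univ, true_and] at hx ⊢
      rcases hx with rfl | ⟨hkx, hxj0⟩
      · exact ⟨Fin.lt_def.mpr (by omega), Fin.lt_def.mpr (by omega)⟩
      · refine ⟨Fin.lt_def.mpr hxj0, Fin.lt_def.mpr ?_⟩
        have hxk : ¬ (σ x : ℕ) < k := by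
          intro hσx
          have hxT : x ∈ T := by simp [hT, hkx, hσx]
          have := hmin x hxT
          rw [Fin.le_def] at this
          omega
        omega
    have hinotin : i ∉ Finset.univ.filter
        (fun j' : Fin n => k ≤ (j' : ℕ) ∧ (j' : ℕ) < (j0 : ℕ)) := by
      simp only [Finset.mem_filter, Finset.mem_univ, true_and, not_and]
      intro hki
      omega
    have hBcard : B.card = (j0 : ℕ) - k + 1 := by
      rw [hB, Finset.card_insert_of_notMem hinotin, aux_card k hkn j0]
    have hle : B.card ≤ invSeq σ j0 := Finset.card_le_card hBsub
    have := h j0 hkj0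
    rw [hBcard] at hle
    omega
end

section
/- If σ is a uniformly random permutation of [n] with exactly m inversions, and A_i denotes the event that σ is decomposable at position i, then for any 1 ≤ i_1 < ··· < i_r ≤ n−1 we have P(A_{i_1} ∩ ··· ∩ A_{i_r}) = P(A_{n−i_1} ∩ ··· ∩ A_{n−i_r}). -/
/-- The number of inversions of `σ`: pairs of positions `i < j` with `σ i > σ j`. -/
def invCount {n : ℕ} (σ : Equiv.Perm (Fin n)) : ℕ :=
  (Finset.univ.filter (fun p : Fin n × Fin n => p.1 < p.2 ∧ σ p.2 < σ p.1)).card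

/-- `σ` is decomposable at position `k`: the first `k` positions map onto the first
`k` values. -/
def DecompAt {n : ℕ} (σ : Equiv.Perm (Fin n)) (k : ℕ) : Prop :=
  ∀ i : Fin n, (i : ℕ) < k → (σ i : ℕ) < k

lemma decompAt_compl {n : ℕ} {σ : Equiv.Perm (Fin n)} {k : ℕ}
    (h : DecompAt σ k) : ∀ i : Fin n, k ≤ (i : ℕ) → k ≤ (σ i : ℕ) := by
  intro i hi
  by_contra hlt
  push_neg at hlt
  set S : Finset (Fin n) := Finset.univ.filter (fun j => (j : ℕ) < k) with hS
  have hmaps : ∀ j ∈ S, σ j ∈ S := by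
    intro j hj; simp [hS] at hj ⊢; exact h j hj
  have himg : S.image σ = S := Finset.eq_of_subset_of_card_le
    (Finset.image_subset_iff.mpr hmaps)
    (by rw [Finset.card_image_of_injective _ σ.injective])
  have hmem : σ i ∈ S := by simpa [hS] using hlt
  rw [← himg] at hmem
  obtain ⟨j, hj, hji⟩ := Finset.mem_image.mp hmem
  have hij := σ.injective hji
  subst hij
  simp [hS] at hj
  omega

lemma invCount_conj {n : ℕ} (σ : Equiv.Perm (Fin n)) :
    invCount (Fin.revPerm * σ * Fin.revPerm) = invCount σ := by
  unfold invCount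
  apply Finset.card_nbij' (fun p => (p.2.rev, p.1.rev)) (fun p => (p.2.rev, p.1.rev))
  · intro p hp
    simp only [Finset.coe_filter, Set.mem_setOf_eq, Finset.mem_coe,
      Finset.mem_filter, Finset.mem_univ, true_and, Equiv.Perm.mul_apply,
      Fin.revPerm_apply, Fin.rev_rev, Fin.rev_lt_rev] at hp ⊢
    exact hp
  · intro p hp
    simp only [Finset.coe_filter, Set.mem_setOf_eq, Finset.mem_coe,
      Finset.mem_filter, Finset.mem_univ, true_and, Equiv.Perm.mul_apply,
      Fin.revPerm_apply, Fin.rev_rev, Fin.rev_lt_rev] at hp ⊢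
    exact hp
  · intro p hp; simp
  · intro p hp; simp

lemma decompAt_conj {n k : ℕ} {σ : Equiv.Perm (Fin n)} (h : DecompAt σ k) :
    DecompAt (Fin.revPerm * σ * Fin.revPerm) (n - k) := by
  intro i hi
  have hin : (i : ℕ) < n := i.isLt
  have hik : k ≤ (i.rev : ℕ) := by
    rw [Fin.val_rev]; omega
  have hs := decompAt_compl h i.rev hik
  have hsn : (σ i.rev : ℕ) < n := (σ i.rev).isLt
  simp only [Equiv.Perm.mul_apply, Fin.revPerm_apply, Fin.val_rev]
  omega

lemma revPerm_conj_conj {n : ℕ} (σ : Equiv.Perm (Fin n)) :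
    Fin.revPerm * (Fin.revPerm * σ * Fin.revPerm) * Fin.revPerm = σ := by
  ext x
  simp [Equiv.Perm.mul_apply]

/-- For `1 ≤ i_1 < ⋯ < i_r ≤ n-1`, the number of permutations of `[n]` with `m`
inversions decomposable at all of `i_1, …, i_r` equals the number decomposable at all of
`n - i_1, …, n - i_r`.  (Equivalently, the corresponding events for a uniformly
random permutation with `m` inversions have equal probability.) -/
theorem decomposition_symmetry (n m r : ℕ) (idx : Fin r → ℕ)
    (hmono : StrictMono idx) (h1 : ∀ j, 1 ≤ idx j) (h2 : ∀ j, idx j ≤ n - 1) :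
    Nat.card {σ : Equiv.Perm (Fin n) // invCount σ = m ∧ ∀ j, DecompAt σ (idx j)}
      = Nat.card {σ : Equiv.Perm (Fin n) // invCount σ = m ∧ ∀ j, DecompAt σ (n - idx j)} := by
  apply Nat.card_congr
  refine ⟨fun σ => ⟨Fin.revPerm * σ.1 * Fin.revPerm, ?_, ?_⟩,
          fun σ => ⟨Fin.revPerm * σ.1 * Fin.revPerm, ?_, ?_⟩, ?_, ?_⟩
  · rw [invCount_conj]; exact σ.2.1
  · intro j; exact decompAt_conj (σ.2.2 j)
  · rw [invCount_conj]; exact σ.2.1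
  · intro j
    have := decompAt_conj (σ.2.2 j)
    have h1j := h1 j
    have h2j := h2 j
    have heq : n - (n - idx j) = idx j := by omega
    rwa [heq] at this
  · intro σ; apply Subtype.ext; exact revPerm_conj_conj σ.1
  · intro σ; apply Subtype.ext; exact revPerm_conj_conj σ.1
end

section
/- Reversing the order of the indecomposable blocks of a permutation preserves the number of inversions: the map ψ on permutations of [n] defined by concatenating the inversion sequences of the indecomposable blocks in reverse order is an involution on S_n that maps the set of permutations with m inversions bijectively onto itself. -/
instance {n : ℕ} (σ : Equiv.Perm (Fin n)) (k : ℕ) : Decidable (DecompAt σ k) :=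
  inferInstanceAs (Decidable (∀ i : Fin n, (i : ℕ) < k → (σ i : ℕ) < k))

/-- The start of the indecomposable block of `σ` containing position `j`:
the largest decomposition point `≤ j` (note `0` is trivially a decomposition point). -/
def blockStart {n : ℕ} (σ : Equiv.Perm (Fin n)) (j : Fin n) : ℕ :=
  ((Finset.range ((j : ℕ) + 1)).filter (fun k => DecompAt σ k)).sup id

/-- The end of the indecomposable block of `σ` containing position `j`:
the smallest decomposition point `> j` (note `n` is trivially a decomposition point). -/
def blockEnd {n : ℕ} (σ : Equiv.Perm (Fin n)) (j : Fin n) : ℕ :=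
  ((Finset.Icc ((j : ℕ) + 1) n).filter (fun k => k = n ∨ DecompAt σ k)).min'
    ⟨n, Finset.mem_filter.mpr ⟨Finset.mem_Icc.mpr ⟨j.isLt, le_rfl⟩, Or.inl rfl⟩⟩

namespace BlockRevAux

variable {n : ℕ}

lemma decompAt_zero (σ : Equiv.Perm (Fin n)) : DecompAt σ 0 :=
  fun _ h => absurd h (Nat.not_lt_zero _)

lemma decompAt_n (σ : Equiv.Perm (Fin n)) : DecompAt σ n := fun i _ => (σ i).isLt

lemma decomp_ge {σ : Equiv.Perm (Fin n)} {k : ℕ} (h : DecompAt σ k) (i : Fin n)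
    (hi : k ≤ (i : ℕ)) : k ≤ ((σ i : Fin n) : ℕ) := by
  by_contra hlt
  push_neg at hlt
  classical
  set S : Finset (Fin n) := Finset.univ.filter (fun x : Fin n => (x : ℕ) < k) with hS
  have hsub : S.image σ ⊆ S := by
    intro y hy
    simp only [hS, Finset.mem_image, Finset.mem_filter, Finset.mem_univ, true_and] at hy ⊢
    obtain ⟨x, hx, rfl⟩ := hy
    exact h x hx
  have heq : S.image σ = S :=
    Finset.eq_of_subset_of_card_le hsub
      (le_of_eq (Finset.card_image_of_injective S σ.injective).symm)
  have hmem : σ i ∈ S := by simp [hS, hlt]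
  rw [← heq] at hmem
  obtain ⟨x, hx, hxe⟩ := Finset.mem_image.mp hmem
  cases σ.injective hxe
  simp only [hS, Finset.mem_filter, Finset.mem_univ, true_and] at hx
  omega

lemma sa_le (σ : Equiv.Perm (Fin n)) (j : Fin n) : blockStart σ j ≤ (j : ℕ) := by
  unfold blockStart
  apply Finset.sup_le
  intro k hk
  simp only [Finset.mem_filter, Finset.mem_range] at hk
  simpa using Nat.lt_succ_iff.mp hk.1

lemma sa_max (σ : Equiv.Perm (Fin n)) (j : Fin n) {k : ℕ} (hk : DecompAt σ k)
    (hkj : k ≤ (j : ℕ)) : k ≤ blockStart σ j := by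
  unfold blockStart
  exact Finset.le_sup (f := id)
    (by simp only [Finset.mem_filter, Finset.mem_range, Nat.lt_succ_iff]; exact ⟨hkj, hk⟩)

lemma decompAt_sa (σ : Equiv.Perm (Fin n)) (j : Fin n) : DecompAt σ (blockStart σ j) := by
  classical
  set s := (Finset.range ((j : ℕ) + 1)).filter (fun k => DecompAt σ k) with hs
  have hne : s.Nonempty := ⟨0, by simp [hs, decompAt_zero]⟩
  have h2 : s.sup id = s.max' hne := le_antisymm
    (Finset.sup_le fun b hb => Finset.le_max' s b hb)
    (Finset.le_sup (f := id) (s.max'_mem hne))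
  have hmem : s.sup id ∈ s := h2 ▸ s.max'_mem hne
  have := (Finset.mem_filter.mp hmem).2
  simpa [blockStart, hs] using this

lemma sb_mem (σ : Equiv.Perm (Fin n)) (j : Fin n) :
    blockEnd σ j ∈ (Finset.Icc ((j : ℕ) + 1) n).filter (fun k => k = n ∨ DecompAt σ k) :=
  Finset.min'_mem _ _

lemma j_lt_sb (σ : Equiv.Perm (Fin n)) (j : Fin n) : (j : ℕ) < blockEnd σ j := by
  have := sb_mem σ j
  simp only [Finset.mem_filter, Finset.mem_Icc] at this
  omega

lemma sb_le_n (σ : Equiv.Perm (Fin n)) (j : Fin n) : blockEnd σ j ≤ n := by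
  have := sb_mem σ j
  simp only [Finset.mem_filter, Finset.mem_Icc] at this
  omega

lemma decompAt_sb (σ : Equiv.Perm (Fin n)) (j : Fin n) : DecompAt σ (blockEnd σ j) := by
  have := (Finset.mem_filter.mp (sb_mem σ j)).2
  rcases this with h | h
  · rw [h]; exact decompAt_n σ
  · exact h

lemma sb_min (σ : Equiv.Perm (Fin n)) (j : Fin n) {k : ℕ} (hk : k = n ∨ DecompAt σ k)
    (hjk : (j : ℕ) < k) (hkn : k ≤ n) : blockEnd σ j ≤ k := by
  apply Finset.min'_le
  simp only [Finset.mem_filter, Finset.mem_Icc]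
  exact ⟨⟨hjk, hkn⟩, hk⟩

lemma same_block (σ : Equiv.Perm (Fin n)) (j i : Fin n) (h1 : blockStart σ j ≤ (i : ℕ))
    (h2 : (i : ℕ) < blockEnd σ j) :
    blockStart σ i = blockStart σ j ∧ blockEnd σ i = blockEnd σ j := by
  have haj := sa_le σ j; have hbj := j_lt_sb σ j; have hbn := sb_le_n σ j
  have hai := sa_le σ i; have hbi := j_lt_sb σ i; have hbin := sb_le_n σ i
  constructor
  · have hge : blockStart σ j ≤ blockStart σ i := sa_max σ i (decompAt_sa σ j) h1
    by_contra hne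
    have hgt : blockStart σ j < blockStart σ i := lt_of_le_of_ne hge (fun h => hne h.symm)
    rcases le_or_gt (blockStart σ i) ((j : ℕ)) with hle | hlt
    · have := sa_max σ j (decompAt_sa σ i) hle
      omega
    · have := sb_min σ j (Or.inr (decompAt_sa σ i)) hlt (by omega)
      omega
  · have hle : blockEnd σ i ≤ blockEnd σ j := sb_min σ i (Or.inr (decompAt_sb σ j)) h2 hbn
    by_contra hne
    have hlt2 : blockEnd σ i < blockEnd σ j := lt_of_le_of_ne hle hne
    have hdi : DecompAt σ (blockEnd σ i) := decompAt_sb σ i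
    rcases le_or_gt (blockEnd σ i) ((j : ℕ)) with hle2 | hgt2
    · have := sa_max σ j hdi hle2
      omega
    · have := sb_min σ j (Or.inr hdi) hgt2 (by omega)
      omega

lemma block_cases (σ : Equiv.Perm (Fin n)) (i j : Fin n) :
    (blockStart σ i = blockStart σ j ∧ blockEnd σ i = blockEnd σ j)
    ∨ blockEnd σ i ≤ blockStart σ j ∨ blockEnd σ j ≤ blockStart σ i := by
  rcases lt_or_ge ((i : ℕ)) (blockStart σ j) with h | h
  · refine Or.inr (Or.inl (sb_min σ i (Or.inr (decompAt_sa σ j)) h ?_))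
    have := sa_le σ j; have := j.isLt; omega
  · rcases lt_or_ge ((i : ℕ)) (blockEnd σ j) with h2 | h2
    · exact Or.inl (same_block σ j i h h2)
    · exact Or.inr (Or.inr (sa_max σ i (decompAt_sb σ j) h2))

lemma sigma_mem_block (σ : Equiv.Perm (Fin n)) (j : Fin n) :
    blockStart σ j ≤ ((σ j : Fin n) : ℕ) ∧ ((σ j : Fin n) : ℕ) < blockEnd σ j :=
  ⟨decomp_ge (decompAt_sa σ j) j (sa_le σ j), decompAt_sb σ j j (j_lt_sb σ j)⟩

def fval (σ : Equiv.Perm (Fin n)) (j : Fin n) : ℕ :=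
  n - blockEnd σ j + ((j : ℕ) - blockStart σ j)

lemma fval_bounds (σ : Equiv.Perm (Fin n)) (j : Fin n) :
    n - blockEnd σ j ≤ fval σ j ∧ fval σ j < n - blockStart σ j := by
  have h1 := sa_le σ j; have h2 := j_lt_sb σ j; have h3 := sb_le_n σ j
  unfold fval; omega

lemma fval_lt_n (σ : Equiv.Perm (Fin n)) (j : Fin n) : fval σ j < n := by
  have := fval_bounds σ j
  omega

lemma fval_cross (σ : Equiv.Perm (Fin n)) (i j : Fin n)
    (h : blockEnd σ i ≤ blockStart σ j) : fval σ j < fval σ i := by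
  have hi := fval_bounds σ i; have hj := fval_bounds σ j
  have h3 := sb_le_n σ i
  omega

lemma key (σ : Equiv.Perm (Fin n)) (i j : Fin n) :
    (fval σ i < fval σ j ∧ fval σ (σ j) < fval σ (σ i)) ↔
      ((i : ℕ) < (j : ℕ) ∧ ((σ j : Fin n) : ℕ) < ((σ i : Fin n) : ℕ)) := by
  have hsi := sigma_mem_block σ i
  have hsj := sigma_mem_block σ j
  have e1 := same_block σ i (σ i) hsi.1 hsi.2
  have e2 := same_block σ j (σ j) hsj.1 hsj.2
  have h1i := sa_le σ i; have h2i := j_lt_sb σ i; have h3i := sb_le_n σ i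
  have h1j := sa_le σ j; have h2j := j_lt_sb σ j; have h3j := sb_le_n σ j
  rcases block_cases σ i j with ⟨ha, hb⟩ | h | h
  · unfold fval at *
    omega
  · have hc : fval σ j < fval σ i := fval_cross σ i j h
    omega
  · have hc : fval σ (σ i) < fval σ (σ j) := by
      apply fval_cross σ (σ j) (σ i)
      rw [e2.2, e1.1]; exact h
    omega

lemma f_inj (σ : Equiv.Perm (Fin n)) :
    Function.Injective (fun j : Fin n => (⟨fval σ j, fval_lt_n σ j⟩ : Fin n)) := by
  intro i j h
  have hv : fval σ i = fval σ j := congrArg Fin.val h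
  have h1i := sa_le σ i; have h2i := j_lt_sb σ i; have h3i := sb_le_n σ i
  have h1j := sa_le σ j; have h2j := j_lt_sb σ j; have h3j := sb_le_n σ j
  rcases block_cases σ i j with ⟨ha, hb⟩ | hc | hc
  · apply Fin.ext
    unfold fval at hv
    omega
  · have := fval_cross σ i j hc; omega
  · have := fval_cross σ j i hc; omega

noncomputable def fE (σ : Equiv.Perm (Fin n)) : Equiv.Perm (Fin n) :=
  Equiv.ofBijective (fun j => ⟨fval σ j, fval_lt_n σ j⟩)
    (Finite.injective_iff_bijective.mp (f_inj σ))

lemma fE_val (σ : Equiv.Perm (Fin n)) (j : Fin n) : ((fE σ j : Fin n) : ℕ) = fval σ j := rfl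

noncomputable def psi (σ : Equiv.Perm (Fin n)) : Equiv.Perm (Fin n) :=
  (fE σ).symm.trans (σ.trans (fE σ))

lemma psi_apply (σ : Equiv.Perm (Fin n)) (x : Fin n) :
    psi σ x = fE σ (σ ((fE σ).symm x)) := rfl

lemma psi_f (σ : Equiv.Perm (Fin n)) (p : Fin n) : psi σ (fE σ p) = fE σ (σ p) := by
  rw [psi_apply, Equiv.symm_apply_apply]

lemma fval_lt_iff (σ : Equiv.Perm (Fin n)) {k : ℕ} (hk : DecompAt σ k) (hkn : k ≤ n)
    (p : Fin n) : fval σ p < n - k ↔ k ≤ (p : ℕ) := by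
  have h1 := sa_le σ p; have h2 := j_lt_sb σ p; have h3 := sb_le_n σ p
  constructor
  · intro h
    by_contra hc
    push_neg at hc
    have := sb_min σ p (Or.inr hk) hc hkn
    have := (fval_bounds σ p).1
    omega
  · intro h
    have := sa_max σ p hk h
    have := (fval_bounds σ p).2
    omega

lemma decompAt_psi (σ : Equiv.Perm (Fin n)) {k : ℕ} (hk : DecompAt σ k) (hkn : k ≤ n) :
    DecompAt (psi σ) (n - k) := by
  intro q hq
  have hq' : q = fE σ ((fE σ).symm q) := (Equiv.apply_symm_apply _ _).symm
  set p := (fE σ).symm q with hp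
  rw [hq'] at hq ⊢
  have hfp : fval σ p < n - k := hq
  have hkp : k ≤ (p : ℕ) := (fval_lt_iff σ hk hkn p).mp hfp
  have hks : k ≤ ((σ p : Fin n) : ℕ) := decomp_ge hk p hkp
  rw [psi_f]
  exact (fval_lt_iff σ hk hkn (σ p)).mpr hks

lemma no_decomp_inside (σ : Equiv.Perm (Fin n)) (j : Fin n) {k : ℕ}
    (h1 : n - blockEnd σ j < k) (h2 : k < n - blockStart σ j) :
    ¬ DecompAt (psi σ) k := by
  intro hd
  have haj := sa_le σ j; have hjb := j_lt_sb σ j; have hbn := sb_le_n σ j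
  set a := blockStart σ j with ha
  set b := blockEnd σ j with hb
  set c := a + k - (n - b) with hc
  have hac : a < c := by omega
  have hcb : c < b := by omega
  have hdc : DecompAt σ c := by
    intro p hp
    rcases lt_or_ge ((p : ℕ)) a with hpa | hpa
    · have := decompAt_sa σ j p hpa
      omega
    · have hpb : (p : ℕ) < b := by omega
      have e := same_block σ j p hpa hpb
      have hfp : fval σ p < k := by unfold fval; rw [e.1, e.2]; omega
      have hτ : ((psi σ) (fE σ p) : ℕ) < k := hd (fE σ p) hfp
      rw [psi_f] at hτ
      have hτ' : fval σ (σ p) < k := hτ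
      have hsp1 : a ≤ ((σ p : Fin n) : ℕ) := decomp_ge (decompAt_sa σ j) p hpa
      have hsp2 : ((σ p : Fin n) : ℕ) < b := decompAt_sb σ j p hpb
      have e2 := same_block σ j (σ p) hsp1 hsp2
      have hfe : fval σ (σ p) = n - b + (((σ p : Fin n) : ℕ) - a) := by
        unfold fval; rw [e2.1, e2.2]
      omega
  rcases le_or_gt c ((j : ℕ)) with h | h
  · have := sa_max σ j hdc h; omega
  · have := sb_min σ j (Or.inr hdc) h (by omega); omega

lemma sa_psi (σ : Equiv.Perm (Fin n)) (j : Fin n) :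
    blockStart (psi σ) (fE σ j) = n - blockEnd σ j := by
  have haj := sa_le σ j; have hjb := j_lt_sb σ j; have hbn := sb_le_n σ j
  have hfb := fval_bounds σ j
  have hge : n - blockEnd σ j ≤ blockStart (psi σ) (fE σ j) :=
    sa_max (psi σ) (fE σ j) (decompAt_psi σ (decompAt_sb σ j) hbn) hfb.1
  have hle : blockStart (psi σ) (fE σ j) ≤ n - blockEnd σ j := by
    by_contra hcon
    push_neg at hcon
    have h1 := sa_le (psi σ) (fE σ j)
    rw [fE_val] at h1
    exact no_decomp_inside σ j hcon (by omega) (decompAt_sa (psi σ) (fE σ j))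
  omega

lemma sb_psi (σ : Equiv.Perm (Fin n)) (j : Fin n) :
    blockEnd (psi σ) (fE σ j) = n - blockStart σ j := by
  have haj := sa_le σ j; have hjb := j_lt_sb σ j; have hbn := sb_le_n σ j
  have hjn := j.isLt
  have hfb := fval_bounds σ j
  have hle : blockEnd (psi σ) (fE σ j) ≤ n - blockStart σ j := by
    apply sb_min (psi σ) (fE σ j) ?_ ?_ (by omega)
    · rcases Nat.eq_zero_or_pos (blockStart σ j) with h0 | hpos
      · exact Or.inl (by omega)
      · exact Or.inr (decompAt_psi σ (decompAt_sa σ j) (by omega))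
    · show ((fE σ j : Fin n) : ℕ) < n - blockStart σ j
      rw [fE_val]; exact hfb.2
  have hge : n - blockStart σ j ≤ blockEnd (psi σ) (fE σ j) := by
    by_contra hcon
    push_neg at hcon
    have h1 := j_lt_sb (psi σ) (fE σ j)
    rw [fE_val] at h1
    have hmem := sb_mem (psi σ) (fE σ j)
    simp only [Finset.mem_filter, Finset.mem_Icc] at hmem
    rcases hmem.2 with hn | hd
    · omega
    · exact no_decomp_inside σ j (by omega) hcon hd
  omega

lemma fE_fE (σ : Equiv.Perm (Fin n)) (j : Fin n) : fE (psi σ) (fE σ j) = j := by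
  apply Fin.ext
  rw [fE_val]
  unfold fval
  rw [sa_psi, sb_psi, fE_val]
  unfold fval
  have := sa_le σ j; have := j_lt_sb σ j; have := sb_le_n σ j
  omega

lemma fE_psi_eq_symm (σ : Equiv.Perm (Fin n)) : fE (psi σ) = (fE σ).symm := by
  apply Equiv.ext
  intro x
  conv_lhs => rw [show x = fE σ ((fE σ).symm x) from (Equiv.apply_symm_apply _ _).symm]
  rw [fE_fE]

lemma psi_psi (σ : Equiv.Perm (Fin n)) : psi (psi σ) = σ := by
  apply Equiv.ext
  intro x
  simp [psi_apply, fE_psi_eq_symm]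

lemma card_filter_comp {α : Type*} [Fintype α] [DecidableEq α] (e : Equiv.Perm α)
    (p : α → Prop) [DecidablePred p] :
    (Finset.univ.filter (fun x => p (e x))).card = (Finset.univ.filter p).card := by
  apply Finset.card_bij (fun a _ => e a)
  · intro a ha
    simp only [Finset.mem_filter, Finset.mem_univ, true_and] at ha ⊢
    exact ha
  · intro a _ b _ h
    exact e.injective h
  · intro b hb
    refine ⟨e.symm b, ?_, by simp⟩
    simp only [Finset.mem_filter, Finset.mem_univ, true_and] at hb ⊢
    simpa using hb

lemma invCount_psi (σ : Equiv.Perm (Fin n)) : invCount (psi σ) = invCount σ := by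
  unfold invCount
  rw [← card_filter_comp ((fE σ).prodCongr (fE σ))
    (fun p : Fin n × Fin n => p.1 < p.2 ∧ (psi σ) p.2 < (psi σ) p.1)]
  congr 1
  apply Finset.filter_congr
  intro p _
  simp only [Equiv.prodCongr_apply, Prod.map, psi_f, Fin.lt_def, fE_val]
  exact key σ p.1 p.2

lemma invSeq_psi (σ : Equiv.Perm (Fin n)) (j : Fin n) :
    invSeq (psi σ) (fE σ j) = invSeq σ j := by
  unfold invSeq
  rw [← card_filter_comp (fE σ)
    (fun i : Fin n => i < fE σ j ∧ (psi σ) (fE σ j) < (psi σ) i)]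
  congr 1
  apply Finset.filter_congr
  intro i _
  simp only [psi_f, Fin.lt_def, fE_val]
  exact key σ i j

end BlockRevAux

/-- Reversing the order of the indecomposable blocks preserves the number of
inversions: there is an involution `ψ` of `S_n` (hence a bijection of the set of
permutations with `m` inversions onto itself, for every `m`) such that the inversion
sequence of `ψ σ` is the concatenation of the inversion sequences of the blocks of `σ`
in reverse order; i.e. a position `j` lying in the block `[a, b)` of `σ` carries its
inversion-sequence entry to position `(n - b) + (j - a)` of `ψ σ`. -/
theorem block_reversal_involution (n : ℕ) :
    ∃ ψ : Equiv.Perm (Fin n) → Equiv.Perm (Fin n),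
      (∀ σ, ψ (ψ σ) = σ) ∧
      (∀ σ, invCount (ψ σ) = invCount σ) ∧
      (∀ (σ : Equiv.Perm (Fin n)) (j : Fin n)
        (h : n - blockEnd σ j + ((j : ℕ) - blockStart σ j) < n),
        invSeq (ψ σ) ⟨n - blockEnd σ j + ((j : ℕ) - blockStart σ j), h⟩ = invSeq σ j) := by
  refine ⟨BlockRevAux.psi, BlockRevAux.psi_psi, BlockRevAux.invCount_psi, ?_⟩
  intro σ j h
  have he : (⟨n - blockEnd σ j + ((j : ℕ) - blockStart σ j), h⟩ : Fin n)
      = BlockRevAux.fE σ j := Fin.ext rfl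
  rw [he]
  exact BlockRevAux.invSeq_psi σ j
end

section
/- For every n ≥ 2 and 0 ≤ m < C(n,2), there exists a matrix ρ with rows indexed by inversion sequences of sum m and columns by inversion sequences of sum m+1, such that: all entries are nonnegative; ρ(x,y) = 0 unless y covers x (y agrees with x except in one coordinate where it is larger by 1); every row sum equals 1; and every column sum equals s(n,m)/s(n,m+1). -/
/-- `s n m`: the number of permutations of `[n]` with exactly `m` inversions
(equivalently, inversion sequences of length `n` with entry sum `m`). -/
def s (n m : ℕ) : ℕ :=
  (Finset.univ.filter (fun σ : Equiv.Perm (Fin n) => invCount σ = m)).card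

/-- An inversion sequence of length `n`: the `i`-th entry lies in `{0, …, i}`
(0-indexed). -/
abbrev InvSeq (n : ℕ) := ∀ i : Fin n, Fin ((i : ℕ) + 1)

/-- `y` covers `x`: `y` agrees with `x` except in one coordinate, where it is larger
by `1`. -/
def Covers {n : ℕ} (x y : InvSeq n) : Prop :=
  ∃ j : Fin n, (y j : ℕ) = (x j : ℕ) + 1 ∧ ∀ i : Fin n, i ≠ j → y i = x i

open Finset

namespace TM

/-- Extended Mahonian numbers, `ℤ`-indexed (zero outside `[0, k(k-1)/2]`). -/
noncomputable def NN : ℕ → ℤ → ℕ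
  | 0, m => if m = 0 then 1 else 0
  | (k+1), m => ∑ l ∈ Finset.Icc (0:ℤ) k, NN k (m - l)

/-- Prefix sums of a row of `NN`. -/
noncomputable def Uf (k : ℕ) (m : ℤ) (t : ℕ) : ℕ := ∑ l ∈ Finset.Icc (0:ℤ) ((t:ℤ) - 1), NN k (m - l)

lemma Icc_insert_top {a b : ℤ} (h : a ≤ b+1) : Finset.Icc a (b+1) = insert (b+1) (Finset.Icc a b) := by
  ext l; simp only [Finset.mem_Icc, Finset.mem_insert]; omega

lemma Icc_shift (h : ℤ → ℕ) (a b t : ℤ) :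
    ∑ l ∈ Finset.Icc (a+t) (b+t), h l = ∑ l ∈ Finset.Icc a b, h (l + t) := by
  rw [← Finset.map_add_right_Icc, Finset.sum_map]
  exact Finset.sum_congr rfl fun l _ => by simp [addRightEmbedding]

lemma NN_succ (k : ℕ) (m : ℤ) : NN (k+1) m = Uf k m (k+1) := by
  simp [NN, Uf]

lemma Uf_zero (k : ℕ) (m : ℤ) : Uf k m 0 = 0 := by
  simp [Uf]

lemma Uf_succ (k : ℕ) (m : ℤ) (t : ℕ) : Uf k m (t+1) = Uf k m t + NN k (m - t) := by
  unfold Uf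
  have h : ((t:ℤ) + 1 - 1) = ((t:ℤ) - 1) + 1 := by ring
  push_cast
  rw [h, Icc_insert_top (by omega), Finset.sum_insert (by simp)]
  have h2 : (t:ℤ) - 1 + 1 = t := by ring
  rw [h2, add_comm]

lemma Uf_succ_bot (k : ℕ) (m : ℤ) (t : ℕ) : Uf k m (t+1) = NN k m + Uf k (m-1) t := by
  unfold Uf
  push_cast
  have h1 : Finset.Icc (0:ℤ) ((t:ℤ) + 1 - 1) = insert (0:ℤ) (Finset.Icc (1:ℤ) (t:ℤ)) := by
    ext l; simp only [Finset.mem_Icc, Finset.mem_insert]; omega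
  rw [h1, Finset.sum_insert (by simp)]
  congr 1
  · norm_num
  · have h2 : (1:ℤ) = 0 + 1 := by ring
    have h3 : (t:ℤ) = ((t:ℤ) - 1) + 1 := by ring
    rw [h2, h3, Icc_shift]
    apply Finset.sum_congr (by norm_num) fun l _ => by ring_nf

lemma Uf_mono (k : ℕ) (m : ℤ) {s t : ℕ} (h : s ≤ t) : Uf k m s ≤ Uf k m t := by
  apply Finset.sum_le_sum_of_subset
  apply Finset.Icc_subset_Icc_right
  omega

lemma NN_zero_of_neg : ∀ (k : ℕ) (m : ℤ), m < 0 → NN k m = 0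
  | 0, m, h => by simp [NN]; omega
  | (k+1), m, h => by
      simp only [NN]
      refine Finset.sum_eq_zero fun l hl => NN_zero_of_neg k _ ?_
      simp only [Finset.mem_Icc] at hl
      omega

lemma choose_two_succ (k : ℕ) : (k+1).choose 2 = k.choose 2 + k := by
  rw [Nat.choose_succ_succ]
  simp [Nat.choose_one_right]
  omega

lemma NN_zero_of_gt : ∀ (k : ℕ) (m : ℤ), (k.choose 2 : ℤ) < m → NN k m = 0
  | 0, m, h => by simp [NN]; omega
  | (k+1), m, h => by
      simp only [NN]
      refine Finset.sum_eq_zero fun l hl => NN_zero_of_gt k _ ?_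
      simp only [Finset.mem_Icc] at hl
      rw [choose_two_succ] at h
      push_cast at h
      omega

lemma NN_pos : ∀ (k : ℕ) (m : ℤ), 0 ≤ m → m ≤ (k.choose 2 : ℤ) → 0 < NN k m
  | 0, m, h0, h1 => by
      have h2 : (0:ℕ).choose 2 = 0 := rfl
      rw [h2] at h1
      simp only [Nat.cast_zero] at h1
      have h3 : m = 0 := le_antisymm h1 h0
      simp [NN, h3]
  | (k+1), m, h0, h1 => by
      rw [choose_two_succ] at h1
      push_cast at h1
      simp only [NN]
      apply Finset.sum_pos' (fun l _ => Nat.zero_le _)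
      refine ⟨max 0 (m - k.choose 2), ?_, ?_⟩
      · simp only [Finset.mem_Icc]
        refine ⟨by omega, by omega⟩
      · exact NN_pos k _ (by omega) (by omega)

lemma NN_zero_zero (k : ℕ) : NN k 0 = 1 := by
  induction k with
  | zero => simp [NN]
  | succ k ih =>
      rw [NN_succ, Uf_succ_bot]
      have h : Uf k (0-1) k = 0 := Finset.sum_eq_zero fun l hl => by
        simp only [Finset.mem_Icc] at hl
        exact NN_zero_of_neg k _ (by omega)
      rw [h, ih]

/-- `Uf` stabilizes once the window passes the support. -/
lemma Uf_stable (k : ℕ) (m : ℤ) {t t' : ℕ} (hm : m < t) (htt : t ≤ t') :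
    Uf k m t' = Uf k m t := by
  unfold Uf
  rw [← Finset.sum_subset (Finset.Icc_subset_Icc_right (by push_cast; omega) :
      Finset.Icc (0:ℤ) ((t:ℤ)-1) ⊆ Finset.Icc (0:ℤ) ((t':ℤ)-1))]
  intro l hl hnl
  simp only [Finset.mem_Icc] at hl hnl
  exact NN_zero_of_neg k _ (by omega)


/-- Strong (TP₂-style) log-concavity of a `ℤ`-indexed sequence. -/
def GLC (a : ℤ → ℕ) : Prop :=
  ∀ p q p' : ℤ, p' ≤ p → p' ≤ q → a p' * a (p + q - p') ≤ a p * a q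

/-- 2×2 Cauchy–Binet-style inequality. -/
lemma cb (S : Finset ℤ) (f g F G : ℤ → ℤ)
    (h : ∀ l1 ∈ S, ∀ l2 ∈ S,
      0 ≤ (f l1 * g l2 - f l2 * g l1) * (F l1 * G l2 - F l2 * G l1)) :
    (∑ l ∈ S, f l * G l) * (∑ l ∈ S, g l * F l) ≤
      (∑ l ∈ S, f l * F l) * (∑ l ∈ S, g l * G l) := by
  have key : ∑ l1 ∈ S, ∑ l2 ∈ S, (f l1 * g l2 - f l2 * g l1) * (F l1 * G l2 - F l2 * G l1)
      = 2 * ((∑ l ∈ S, f l * F l) * (∑ l ∈ S, g l * G l)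
          - (∑ l ∈ S, f l * G l) * (∑ l ∈ S, g l * F l)) := by
    have e1 : ∀ l1 ∈ S, ∑ l2 ∈ S, (f l1 * g l2 - f l2 * g l1) * (F l1 * G l2 - F l2 * G l1)
        = (f l1 * F l1) * (∑ l ∈ S, g l * G l) - (f l1 * G l1) * (∑ l ∈ S, g l * F l)
          - (∑ l ∈ S, f l * G l) * (g l1 * F l1) + (∑ l ∈ S, f l * F l) * (g l1 * G l1) := by
      intro l1 _
      rw [Finset.mul_sum, Finset.mul_sum, Finset.sum_mul, Finset.sum_mul,
        ← Finset.sum_sub_distrib, ← Finset.sum_sub_distrib, ← Finset.sum_add_distrib]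
      exact Finset.sum_congr rfl fun l2 _ => by ring
    rw [Finset.sum_congr rfl e1]
    rw [Finset.sum_add_distrib, Finset.sum_sub_distrib, Finset.sum_sub_distrib,
      ← Finset.sum_mul, ← Finset.sum_mul, ← Finset.mul_sum, ← Finset.mul_sum]
    ring
  have hnn : 0 ≤ ∑ l1 ∈ S, ∑ l2 ∈ S, (f l1 * g l2 - f l2 * g l1) * (F l1 * G l2 - F l2 * G l1) :=
    Finset.sum_nonneg fun l1 h1 => Finset.sum_nonneg fun l2 h2 => h l1 h1 l2 h2
  rw [key] at hnn
  linarith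

lemma Icc_shift' (h : ℤ → ℤ) (a b t : ℤ) :
    ∑ l ∈ Finset.Icc (a+t) (b+t), h l = ∑ l ∈ Finset.Icc a b, h (l + t) := by
  rw [← Finset.map_add_right_Icc, Finset.sum_map]
  exact Finset.sum_congr rfl fun l _ => by simp [addRightEmbedding]

/-- Convolution with the interval-indicator preserves `GLC`. -/
lemma GLC.conv {a : ℤ → ℕ} (ha : GLC a) (k : ℕ) :
    GLC (fun m => ∑ l ∈ Finset.Icc (0:ℤ) k, a (m - l)) := by
  intro p q p' hp hq
  set q' : ℤ := p + q - p' with hq'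
  set r2 : ℤ := q' - q with hr2
  have hr2nn : 0 ≤ r2 := by omega
  set S : Finset ℤ := Finset.Icc (0:ℤ) (r2 + k) with hS
  set b : ℤ → ℤ := fun l => if 0 ≤ l ∧ l ≤ (k:ℤ) then 1 else 0 with hb
  -- express each convolution value as a weighted sum over `S`
  have hsum : ∀ r x : ℤ, 0 ≤ r → r ≤ r2 →
      ∑ l ∈ S, b (l - r) * (a (x - l) : ℤ) = ((∑ l ∈ Finset.Icc (0:ℤ) k, a (x - r - l) : ℕ) : ℤ) := by
    intro r x hr hrr
    push_cast
    have h1 : ∀ l ∈ S, b (l - r) * (a (x - l) : ℤ)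
        = if l ∈ Finset.Icc r (r + k) then (a (x - l) : ℤ) else 0 := by
      intro l _
      by_cases hc : r ≤ l ∧ l ≤ r + k
      · rw [if_pos (by simp [Finset.mem_Icc]; omega)]
        simp only [hb]
        rw [if_pos (by omega)]
        ring
      · rw [if_neg (by simp [Finset.mem_Icc]; omega)]
        simp only [hb]
        rw [if_neg (by omega)]
        ring
    rw [Finset.sum_congr rfl h1, Finset.sum_ite_mem]
    have h2 : S ∩ Finset.Icc r (r + k) = Finset.Icc r (r + k) := by
      apply Finset.inter_eq_right.mpr
      intro l hl
      simp only [hS, Finset.mem_Icc] at hl ⊢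
      omega
    rw [h2]
    have h3 : Finset.Icc r (r + (k:ℤ)) = Finset.Icc (0 + r) ((k:ℤ) + r) := by
      congr 1 <;> ring
    rw [h3, Icc_shift' (fun l => (a (x - l) : ℤ))]
    exact Finset.sum_congr rfl fun l _ => by ring_nf
  have e1 := hsum 0 p (le_refl 0) hr2nn
  have e2 := hsum r2 q' hr2nn (le_refl r2)
  have e3 := hsum r2 p hr2nn (le_refl r2)
  have e4 := hsum 0 q' (le_refl 0) hr2nn
  simp only [sub_zero] at e1 e4
  have e2' : q' - r2 = q := by omega
  have e3' : p - r2 = p' := by omega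
  rw [e2'] at e2; rw [e3'] at e3
  -- apply cb with f l = b l, F l = a (p - l), g l = b (l - r2), G l = a (q' - l)
  have hmain := cb S (fun l => b l) (fun l => b (l - r2)) (fun l => (a (p - l) : ℤ))
      (fun l => (a (q' - l) : ℤ)) ?_
  · -- ∑ f G = conv q', ∑ g F = conv p', ∑ f F = conv p, ∑ g G = conv q
    have k1 : ∑ l ∈ S, b l * (a (q' - l) : ℤ) = ((∑ l ∈ Finset.Icc (0:ℤ) k, a (q' - l) : ℕ) : ℤ) := e4
    have k2 : ∑ l ∈ S, b (l - r2) * (a (p - l) : ℤ) = ((∑ l ∈ Finset.Icc (0:ℤ) k, a (p' - l) : ℕ) : ℤ) := e3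
    have k3 : ∑ l ∈ S, b l * (a (p - l) : ℤ) = ((∑ l ∈ Finset.Icc (0:ℤ) k, a (p - l) : ℕ) : ℤ) := e1
    have k4 : ∑ l ∈ S, b (l - r2) * (a (q' - l) : ℤ) = ((∑ l ∈ Finset.Icc (0:ℤ) k, a (q - l) : ℕ) : ℤ) := e2
    rw [k1, k2, k3, k4] at hmain
    have hN : (∑ l ∈ Finset.Icc (0:ℤ) k, a (q' - l)) * (∑ l ∈ Finset.Icc (0:ℤ) k, a (p' - l))
        ≤ (∑ l ∈ Finset.Icc (0:ℤ) k, a (p - l)) * (∑ l ∈ Finset.Icc (0:ℤ) k, a (q - l)) := by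
      exact_mod_cast hmain
    calc (∑ l ∈ Finset.Icc (0:ℤ) k, a (p' - l)) * (∑ l ∈ Finset.Icc (0:ℤ) k, a ((p + q - p') - l))
        = (∑ l ∈ Finset.Icc (0:ℤ) k, a (q' - l)) * (∑ l ∈ Finset.Icc (0:ℤ) k, a (p' - l)) := by
          rw [mul_comm]
      _ ≤ _ := hN
  · -- minors are nonneg
    have claimB : ∀ l1 l2 : ℤ, l1 ≤ l2 → 0 ≤ b l1 * b (l2 - r2) - b l2 * b (l1 - r2) := by
      intro l1 l2 h12
      simp only [hb]
      split_ifs <;> omega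
    have claimA : ∀ l1 l2 : ℤ, l1 ≤ l2 →
        (a (p - l2) : ℤ) * a (q' - l1) ≤ (a (p - l1) : ℤ) * a (q' - l2) := by
      intro l1 l2 h12
      have h := ha (p - l1) (q' - l2) (p - l2) (by omega) (by omega)
      have harg : (p - l1) + (q' - l2) - (p - l2) = q' - l1 := by ring
      rw [harg] at h
      exact_mod_cast h
    intro l1 _ l2 _
    rcases le_total l1 l2 with h12 | h21
    · exact mul_nonneg (claimB l1 l2 h12) (by have := claimA l1 l2 h12; linarith)
    · have hrw : (b l1 * b (l2 - r2) - b l2 * b (l1 - r2)) *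
          ((a (p - l1) : ℤ) * a (q' - l2) - (a (p - l2) : ℤ) * a (q' - l1))
          = (b l2 * b (l1 - r2) - b l1 * b (l2 - r2)) *
            ((a (p - l2) : ℤ) * a (q' - l1) - (a (p - l1) : ℤ) * a (q' - l2)) := by ring
      rw [hrw]
      exact mul_nonneg (claimB l2 l1 h21) (by have := claimA l2 l1 h21; linarith)

lemma NN_glc : ∀ k : ℕ, GLC (NN k)
  | 0 => by
      intro p q p' hp hq
      simp only [NN]
      split_ifs <;> omega
  | (k+1) => by
      intro p q p' hp hq
      have h := (NN_glc k).conv k p q p' hp hq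
      simpa [NN] using h

lemma key_step (k : ℕ) (m : ℤ) (t t' : ℕ) (h : t ≤ t') :
    Uf k (m+1) t * NN k (m - t') ≤ Uf k m t * NN k (m + 1 - t') := by
  unfold Uf
  rw [Finset.sum_mul, Finset.sum_mul]
  apply Finset.sum_le_sum
  intro l hl
  simp only [Finset.mem_Icc] at hl
  have hg := NN_glc k (m - l) (m + 1 - t') (m - t') (by omega) (by omega)
  have harg : (m - l) + (m + 1 - t') - (m - t') = m + 1 - l := by ring
  rw [harg] at hg
  calc NN k (m + 1 - l) * NN k (m - t')
      = NN k (m - t') * NN k (m + 1 - l) := mul_comm _ _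
    _ ≤ NN k (m - l) * NN k (m + 1 - t') := hg

lemma ineq1 (k : ℕ) (m : ℤ) (t : ℕ) : ∀ t' : ℕ, t ≤ t' →
    Uf k (m+1) t * Uf k m t' ≤ Uf k m t * Uf k (m+1) t' := by
  intro t' ht
  induction t', ht using Nat.le_induction with
  | base => exact le_of_eq (mul_comm _ _)
  | succ t' ht ih =>
      rw [Uf_succ, Uf_succ]
      rw [Nat.mul_add, Nat.mul_add]
      have h2 := key_step k m t t' ht
      have harg : m + 1 - (t':ℤ) = (m+1) - (t':ℤ) := by ring
      exact Nat.add_le_add ih (by rw [← harg]; exact h2)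

lemma ineq2 (k : ℕ) (m : ℤ) (t : ℕ) (h : t ≤ k) :
    Uf k m t * Uf k (m+1) (k+1) ≤ Uf k (m+1) (t+1) * Uf k m (k+1) := by
  have b0 : ((m:ℤ)+1-1) = m := by ring
  have b1 : Uf k (m+1) (t+1) = NN k (m+1) + Uf k m t := by
    rw [Uf_succ_bot, b0]
  have b2 : Uf k (m+1) (k+1) = NN k (m+1) + Uf k m k := by
    rw [Uf_succ_bot, b0]
  rw [b1, b2, Nat.mul_add, Nat.add_mul]
  apply Nat.add_le_add
  · rw [mul_comm]
    exact Nat.mul_le_mul_left _ (Uf_mono k m (by omega))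
  · exact Nat.mul_le_mul_left _ (Uf_mono k m (by omega))

/-- ratio `s(k+1,m)/s(k+1,m+1)`. -/
noncomputable def Rr (k : ℕ) (m : ℤ) : ℝ := (NN (k+1) m : ℝ) / (NN (k+1) (m+1) : ℝ)

/-- weight for moving up inside the first `k` coordinates. -/
noncomputable def Ac (k : ℕ) (m : ℤ) (c : ℕ) : ℝ :=
  ((Uf k (m+1) (c+1) : ℝ) * Rr k m - (Uf k m c : ℝ)) / (NN k (m - c) : ℝ)

/-- weight for moving up in the last coordinate. -/
noncomputable def Bc (k : ℕ) (m : ℤ) (c : ℕ) : ℝ :=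
  ((Uf k m (c+1) : ℝ) - (Uf k (m+1) (c+1) : ℝ) * Rr k m) / (NN k (m - c) : ℝ)

section RealIneqs

variable {k : ℕ} {m : ℤ} (hV : 0 < NN (k+1) (m+1))

lemma V_eq : NN (k+1) (m+1) = Uf k (m+1) (k+1) := NN_succ k (m+1)

lemma U_eq : NN (k+1) m = Uf k m (k+1) := NN_succ k m

include hV in
lemma hRmul {t : ℕ} (ht : t ≤ k+1) : (Uf k (m+1) t : ℝ) * Rr k m ≤ (Uf k m t : ℝ) := by
  have hQ : (0:ℝ) < (NN (k+1) (m+1) : ℝ) := by exact_mod_cast hV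
  rw [Rr, mul_div_assoc']
  rw [div_le_iff₀ hQ]
  have h := ineq1 k m t (k+1) ht
  rw [show Uf k m (k+1) = NN (k+1) m from (U_eq).symm,
    show Uf k (m+1) (k+1) = NN (k+1) (m+1) from (V_eq).symm] at h
  exact_mod_cast h

include hV in
lemma hRmul2 {t : ℕ} (ht : t ≤ k) : (Uf k m t : ℝ) ≤ (Uf k (m+1) (t+1) : ℝ) * Rr k m := by
  have hQ : (0:ℝ) < (NN (k+1) (m+1) : ℝ) := by exact_mod_cast hV
  rw [Rr, mul_div_assoc']
  rw [le_div_iff₀ hQ]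
  have h := ineq2 k m t ht
  rw [show Uf k m (k+1) = NN (k+1) m from (U_eq).symm,
    show Uf k (m+1) (k+1) = NN (k+1) (m+1) from (V_eq).symm] at h
  exact_mod_cast h

include hV in
lemma Ac_nonneg {c : ℕ} (hc : c ≤ k) : 0 ≤ Ac k m c := by
  apply div_nonneg _ (by positivity)
  have := hRmul2 hV hc
  linarith

include hV in
lemma Bc_nonneg {c : ℕ} (hc : c ≤ k) : 0 ≤ Bc k m c := by
  apply div_nonneg _ (by positivity)
  have := hRmul hV (by omega : c+1 ≤ k+1)
  linarith

include hV in
lemma Ac_add_Bc {c : ℕ} (hc : c ≤ k) (hu : 0 < NN k (m - c)) : Ac k m c + Bc k m c = 1 := by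
  have hu' : (0:ℝ) < (NN k (m - c) : ℝ) := by exact_mod_cast hu
  rw [Ac, Bc, ← add_div]
  have hs : (Uf k m (c+1) : ℝ) = (Uf k m c : ℝ) + (NN k (m - c) : ℝ) := by
    exact_mod_cast Uf_succ k m c
  rw [hs]
  field_simp
  ring

include hV in
lemma Ac_eq_zero_top {c : ℕ} (hc : c ≤ k) (htop : NN k (m + 1 - c) = 0) : Ac k m c = 0 := by
  have h1 : (Uf k m c : ℝ) ≤ (Uf k (m+1) (c+1) : ℝ) * Rr k m := hRmul2 hV hc
  have hs : Uf k (m+1) (c+1) = Uf k (m+1) c := by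
    rw [Uf_succ, htop, Nat.add_zero]
  have h2 : (Uf k (m+1) (c+1) : ℝ) * Rr k m ≤ (Uf k m c : ℝ) := by
    rw [hs]
    exact hRmul hV (by omega : c ≤ k+1)
  have h3 : (Uf k (m+1) (c+1) : ℝ) * Rr k m = (Uf k m c : ℝ) := le_antisymm h2 h1
  rw [Ac, h3, sub_self, zero_div]

include hV in
lemma Bc_eq_one_top {c : ℕ} (hc : c ≤ k) (htop : NN k (m + 1 - c) = 0)
    (hu : 0 < NN k (m - c)) : Bc k m c = 1 := by
  have h1 := Ac_add_Bc hV hc hu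
  have h2 := Ac_eq_zero_top hV hc htop
  linarith

include hV in
lemma Ac_top (hu : 0 < NN k (m - k)) : Ac k m k = 1 := by
  have hQ : (0:ℝ) < (NN (k+1) (m+1) : ℝ) := by exact_mod_cast hV
  have hVr : ((NN (k+1) (m+1) : ℕ) : ℝ) = (Uf k (m+1) (k+1) : ℝ) := by exact_mod_cast V_eq
  have hc1 : (Uf k (m+1) (k+1) : ℝ) * Rr k m = (NN (k+1) m : ℝ) := by
    rw [Rr, ← hVr]
    field_simp
  have hc2 : (NN (k+1) m : ℝ) = (Uf k m k : ℝ) + (NN k (m - k) : ℝ) := by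
    rw [U_eq]
    exact_mod_cast Uf_succ k m k
  have hu' : (0:ℝ) < (NN k (m - k) : ℝ) := by exact_mod_cast hu
  rw [Ac, hc1, hc2]
  field_simp
  ring

end RealIneqs

/-- In the boundary case `d = m+1 ≤ k` the last-coordinate weight equals the ratio. -/
lemma Bc_col_top {k m : ℕ} (hmk : m + 1 ≤ k) : Bc k (m:ℤ) m = Rr k m := by
  have e1 : Uf k m (k+1) = Uf k m (m+1) := Uf_stable k m (by push_cast; omega) (by omega)
  have e2 : Uf k ((m:ℤ)+1) (k+1) = Uf k ((m:ℤ)+1) (m+2) :=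
    Uf_stable k ((m:ℤ)+1) (by push_cast; omega) (by omega)
  have e3 : Uf k ((m:ℤ)+1) (m+2) = Uf k ((m:ℤ)+1) (m+1) + 1 := by
    rw [Uf_succ]
    have harg : (m:ℤ) + 1 - ((m+1 : ℕ) : ℤ) = 0 := by push_cast; ring
    rw [harg, NN_zero_zero]
  have harg2 : (m:ℤ) - (m:ℕ) = 0 := by push_cast; ring
  rw [Bc, Rr, U_eq, V_eq, e1, e2, e3, harg2, NN_zero_zero]
  have hpos : (0:ℝ) < (Uf k ((m:ℤ)+1) (m+1) : ℝ) + 1 := by positivity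
  push_cast
  rw [div_one]
  field_simp
  ring



/-! ### The flow on inversion sequences -/

def lev {n : ℕ} (x : InvSeq n) : ℕ := ∑ i, (x i : ℕ)

lemma sum_fin_val (n : ℕ) : ∑ i : Fin n, (i : ℕ) = n.choose 2 := by
  rw [Fin.sum_univ_eq_sum_range (fun i => i) n, Nat.choose_two_right]
  rw [← Finset.sum_range_id_mul_two n]
  exact (Nat.mul_div_cancel _ (by norm_num)).symm

lemma lev_le {n : ℕ} (x : InvSeq n) : lev x ≤ n.choose 2 := by
  rw [← sum_fin_val n]
  exact Finset.sum_le_sum fun i _ => Nat.lt_succ_iff.mp (x i).isLt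

lemma init_snoc' {k : ℕ} (x' : InvSeq k) (c : Fin (k+1)) :
    Fin.init (Fin.snoc x' c : InvSeq (k+1)) = x' :=
  Fin.init_snoc (α := fun i : Fin (k+1) => Fin ((i:ℕ)+1)) c x'

lemma snoc_last' {k : ℕ} (x' : InvSeq k) (c : Fin (k+1)) :
    (Fin.snoc x' c : InvSeq (k+1)) (Fin.last k) = c :=
  Fin.snoc_last (α := fun i : Fin (k+1) => Fin ((i:ℕ)+1)) c x'

lemma lev_decomp {k : ℕ} (x : InvSeq (k+1)) :
    lev x = lev (Fin.init x) + (x (Fin.last k) : ℕ) := by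
  rw [lev, Fin.sum_univ_castSucc]; rfl

lemma lev_snoc {k : ℕ} (x' : InvSeq k) (c : Fin (k+1)) :
    lev (Fin.snoc x' c : InvSeq (k+1)) = lev x' + (c : ℕ) := by
  rw [lev_decomp, init_snoc', snoc_last']

lemma sum_invseq_succ {M : Type*} [AddCommMonoid M] (k : ℕ) (f : InvSeq (k+1) → M) :
    ∑ x : InvSeq (k+1), f x = ∑ c : Fin (k+1), ∑ x' : InvSeq k, f (Fin.snoc x' c) := by
  rw [← (Fin.snocEquiv (fun i : Fin (k+1) => Fin ((i:ℕ)+1))).sum_comp f]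
  rw [Fintype.sum_prod_type]
  rfl

lemma covers_lev {n : ℕ} {x y : InvSeq n} (h : Covers x y) : lev y = lev x + 1 := by
  obtain ⟨j, hj, hoth⟩ := h
  have hy : lev y = (∑ i ∈ Finset.univ.erase j, (y i : ℕ)) + (y j : ℕ) :=
    (Finset.sum_erase_add _ _ (Finset.mem_univ j)).symm
  have hx : lev x = (∑ i ∈ Finset.univ.erase j, (x i : ℕ)) + (x j : ℕ) :=
    (Finset.sum_erase_add _ _ (Finset.mem_univ j)).symm
  have he : ∑ i ∈ Finset.univ.erase j, (y i : ℕ) = ∑ i ∈ Finset.univ.erase j, (x i : ℕ) :=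
    Finset.sum_congr rfl fun i hi => by rw [hoth i (Finset.ne_of_mem_erase hi)]
  rw [hy, hx, he, hj]
  ring

lemma covers_snoc_up {k : ℕ} {x y : InvSeq (k+1)}
    (h1 : Fin.init y = Fin.init x) (h2 : (y (Fin.last k) : ℕ) = (x (Fin.last k) : ℕ) + 1) :
    Covers x y := by
  refine ⟨Fin.last k, h2, fun i hi => ?_⟩
  obtain ⟨i', rfl⟩ := Fin.exists_castSucc_eq.mpr hi
  exact congrFun h1 i'

lemma covers_snoc_extend {k : ℕ} {x y : InvSeq (k+1)}
    (hlast : y (Fin.last k) = x (Fin.last k)) (hcov : Covers (Fin.init x) (Fin.init y)) :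
    Covers x y := by
  obtain ⟨j, hj, hoth⟩ := hcov
  refine ⟨Fin.castSucc j, hj, fun i hi => ?_⟩
  induction i using Fin.lastCases with
  | last => exact hlast
  | cast i' =>
      have hne : i' ≠ j := fun hc => hi (by rw [hc])
      exact hoth i' hne

noncomputable def Fl : (k : ℕ) → ℕ → InvSeq k → InvSeq k → ℝ
  | 0, _, _, _ => 0
  | (k+1), m, x, y =>
    (if Fin.init y = Fin.init x ∧ (y (Fin.last k) : ℕ) = (x (Fin.last k) : ℕ) + 1
      then Bc k m (x (Fin.last k)) else 0)
    + (if y (Fin.last k) = x (Fin.last k)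
      then Ac k m (x (Fin.last k)) * Fl k (m - (x (Fin.last k) : ℕ)) (Fin.init x) (Fin.init y)
      else 0)

lemma flow_support : ∀ (k m : ℕ) (x y : InvSeq k), ¬ Covers x y → Fl k m x y = 0
  | 0, m, x, y, h => rfl
  | (k+1), m, x, y, h => by
      rw [Fl]
      have h1 : ¬(Fin.init y = Fin.init x ∧ (y (Fin.last k) : ℕ) = (x (Fin.last k) : ℕ) + 1) :=
        fun hc => h (covers_snoc_up hc.1 hc.2)
      rw [if_neg h1, zero_add]
      by_cases h2 : y (Fin.last k) = x (Fin.last k)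
      · rw [if_pos h2]
        have h3 : ¬ Covers (Fin.init x) (Fin.init y) := fun hc => h (covers_snoc_extend h2 hc)
        rw [flow_support k _ _ _ h3, mul_zero]
      · rw [if_neg h2]

lemma cast_sub_of_le {m c : ℕ} (h : c ≤ m) : ((m - c : ℕ) : ℤ) = (m : ℤ) - c := by
  push_cast [h]; ring

lemma flow_nonneg : ∀ (k m : ℕ), m < k.choose 2 → ∀ x y : InvSeq k, lev x = m →
    0 ≤ Fl k m x y
  | 0, m, hm, x, y, hx => le_refl 0
  | (k+1), m, hm, x, y, hx => by
      have hV : 0 < NN (k+1) ((m:ℤ)+1) :=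
        NN_pos _ _ (by omega) (by exact_mod_cast Nat.add_one_le_iff.mpr hm)
      set c : Fin (k+1) := x (Fin.last k) with hc
      have hck : (c : ℕ) ≤ k := Nat.lt_succ_iff.mp c.isLt
      have hcm : (c : ℕ) ≤ m := by
        rw [← hx, lev_decomp]; omega
      have ha : lev (Fin.init x) = m - (c:ℕ) := by
        have := lev_decomp x; omega
      have hale : m - (c:ℕ) ≤ k.choose 2 := ha ▸ lev_le _
      have hu : 0 < NN k ((m:ℤ) - c) := by
        rw [← cast_sub_of_le hcm]
        exact NN_pos _ _ (by positivity) (by exact_mod_cast hale)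
      rw [Fl]
      apply add_nonneg
      · split_ifs with h
        · exact Bc_nonneg hV hck
        · exact le_refl 0
      · split_ifs with h
        · rcases Nat.lt_or_ge (m - (c:ℕ)) (k.choose 2) with hlt | hge
          · exact mul_nonneg (Ac_nonneg hV hck) (flow_nonneg k _ hlt _ _ ha)
          · have hatop : m - (c:ℕ) = k.choose 2 := le_antisymm hale hge
            have htop : NN k ((m:ℤ)+1 - c) = 0 := by
              apply NN_zero_of_gt
              have : ((m:ℤ) - c) = (k.choose 2 : ℤ) := by
                rw [← cast_sub_of_le hcm, hatop]
              omega
            rw [Ac_eq_zero_top hV hck htop, zero_mul]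
        · exact le_refl 0

lemma sum_fin_ite (k : ℕ) (v : ℕ) (B : ℝ) :
    ∑ d : Fin (k+1), (if (d:ℕ) = v then B else 0) = if v ≤ k then B else 0 := by
  by_cases hv : v ≤ k
  · rw [if_pos hv, Finset.sum_eq_single (⟨v, by omega⟩ : Fin (k+1))]
    · simp
    · intro d _ hne
      rw [if_neg fun hdv => hne (Fin.ext hdv)]
    · intro h; exact absurd (Finset.mem_univ _) h
  · rw [if_neg hv]
    apply Finset.sum_eq_zero
    intro d _
    rw [if_neg]
    have := d.isLt
    omega

lemma flow_row : ∀ (k m : ℕ), m < k.choose 2 → ∀ x : InvSeq k, lev x = m →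
    ∑ y : InvSeq k, Fl k m x y = 1
  | 0, m, hm, x, hx => by
      exact absurd hm (by simp [Nat.choose])
  | (k+1), m, hm, x, hx => by
      have hV : 0 < NN (k+1) ((m:ℤ)+1) :=
        NN_pos _ _ (by omega) (by exact_mod_cast Nat.add_one_le_iff.mpr hm)
      set c : Fin (k+1) := x (Fin.last k) with hc
      have hck : (c : ℕ) ≤ k := Nat.lt_succ_iff.mp c.isLt
      have hcm : (c : ℕ) ≤ m := by rw [← hx, lev_decomp]; omega
      have ha : lev (Fin.init x) = m - (c:ℕ) := by have := lev_decomp x; omega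
      have hale : m - (c:ℕ) ≤ k.choose 2 := ha ▸ lev_le _
      have hu : 0 < NN k ((m:ℤ) - c) := by
        rw [← cast_sub_of_le hcm]
        exact NN_pos _ _ (by positivity) (by exact_mod_cast hale)
      have hmk : m < k.choose 2 + k := by
        have := choose_two_succ k; omega
      rw [sum_invseq_succ]
      have hterm : ∀ (d : Fin (k+1)) (y' : InvSeq k), Fl (k+1) m x (Fin.snoc y' d)
          = (if (d:ℕ) = (c:ℕ)+1 then (if y' = Fin.init x then Bc k m c else 0) else 0)
            + (if d = c then Ac k m c * Fl k (m - (c:ℕ)) (Fin.init x) y' else 0) := by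
        intro d y'
        rw [Fl, init_snoc', snoc_last', ← hc]
        congr 1
        by_cases h1 : (d:ℕ) = (c:ℕ)+1 <;> by_cases h2 : y' = Fin.init x <;>
          simp [h1, h2]
      simp only [hterm]
      rw [Finset.sum_congr rfl fun d _ => Finset.sum_add_distrib]
      rw [Finset.sum_add_distrib]
      have hfirst : ∑ d : Fin (k+1), ∑ y' : InvSeq k,
          (if (d:ℕ) = (c:ℕ)+1 then (if y' = Fin.init x then Bc k m c else 0) else 0)
          = if (c:ℕ)+1 ≤ k then Bc k m c else 0 := by
        rw [← sum_fin_ite k ((c:ℕ)+1) (Bc k m c)]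
        apply Finset.sum_congr rfl
        intro d _
        by_cases h1 : (d:ℕ) = (c:ℕ)+1 <;> simp [h1]
      have hsecond : ∑ d : Fin (k+1), ∑ y' : InvSeq k,
          (if d = c then Ac k m c * Fl k (m - (c:ℕ)) (Fin.init x) y' else 0)
          = Ac k m c * ∑ y' : InvSeq k, Fl k (m - (c:ℕ)) (Fin.init x) y' := by
        have h1 : ∀ d : Fin (k+1),
            (∑ y' : InvSeq k, if d = c then Ac k m c * Fl k (m - (c:ℕ)) (Fin.init x) y' else 0)
            = if d = c then Ac k m c * ∑ y' : InvSeq k, Fl k (m - (c:ℕ)) (Fin.init x) y' else 0 := by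
          intro d
          by_cases h : d = c
          · simp [h, Finset.mul_sum]
          · simp [h]
        rw [Finset.sum_congr rfl fun d _ => h1 d]
        simp
      rw [hfirst, hsecond]
      rcases Nat.lt_or_ge (m - (c:ℕ)) (k.choose 2) with hlt | hge
      · rw [flow_row k _ hlt _ ha, mul_one]
        rcases Nat.lt_or_ge (c:ℕ) k with hck2 | hck2
        · rw [if_pos (by omega)]
          have := Ac_add_Bc hV hck hu
          linarith
        · have hc_eq : (c:ℕ) = k := le_antisymm hck hck2
          rw [if_neg (by omega), zero_add]
          have hu' := hu
          rw [hc_eq] at hu'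
          have := Ac_top hV hu'
          rw [hc_eq]
          linarith
      · have hatop : m - (c:ℕ) = k.choose 2 := le_antisymm hale hge
        have hck2 : (c:ℕ) < k := by omega
        have htop : NN k ((m:ℤ)+1 - c) = 0 := by
          apply NN_zero_of_gt
          have : ((m:ℤ) - c) = (k.choose 2 : ℤ) := by rw [← cast_sub_of_le hcm, hatop]
          omega
        rw [if_pos (by omega), Bc_eq_one_top hV hck htop hu, Ac_eq_zero_top hV hck htop, zero_mul,
          add_zero]

lemma flow_col : ∀ (k m : ℕ), m < k.choose 2 → ∀ y : InvSeq k, lev y = m + 1 →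
    ∑ x : InvSeq k, Fl k m x y = (NN k (m:ℤ) : ℝ) / (NN k ((m:ℤ)+1) : ℝ)
  | 0, m, hm, y, hy => absurd hm (by simp [Nat.choose])
  | (k+1), m, hm, y, hy => by
      have hV : 0 < NN (k+1) ((m:ℤ)+1) :=
        NN_pos _ _ (by omega) (by exact_mod_cast Nat.add_one_le_iff.mpr hm)
      have hVr : (0:ℝ) < (NN (k+1) ((m:ℤ)+1) : ℝ) := by exact_mod_cast hV
      set d : Fin (k+1) := y (Fin.last k) with hd
      have hdk : (d : ℕ) ≤ k := Nat.lt_succ_iff.mp d.isLt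
      have hdm : (d : ℕ) ≤ m + 1 := by rw [← hy, lev_decomp]; omega
      have hblev : lev (Fin.init y) = m + 1 - (d:ℕ) := by have := lev_decomp y; omega
      rw [sum_invseq_succ]
      have hterm : ∀ (c : Fin (k+1)) (x' : InvSeq k), Fl (k+1) m (Fin.snoc x' c) y
          = (if (d:ℕ) = (c:ℕ)+1 then (if Fin.init y = x' then Bc k m c else 0) else 0)
            + (if d = c then Ac k m c * Fl k (m - (c:ℕ)) x' (Fin.init y) else 0) := by
        intro c x'
        rw [Fl, init_snoc', snoc_last', ← hd]
        congr 1
        by_cases h1 : (d:ℕ) = (c:ℕ)+1 <;> by_cases h2 : Fin.init y = x' <;>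
          simp [h1, h2]
      simp only [hterm]
      rw [Finset.sum_congr rfl fun c _ => Finset.sum_add_distrib]
      rw [Finset.sum_add_distrib]
      have hfirst : ∑ c : Fin (k+1), ∑ x' : InvSeq k,
          (if (d:ℕ) = (c:ℕ)+1 then (if Fin.init y = x' then Bc k m c else 0) else 0)
          = if 1 ≤ (d:ℕ) then Bc k m ((d:ℕ)-1) else 0 := by
        have h1 : ∀ c : Fin (k+1), (∑ x' : InvSeq k,
            (if (d:ℕ) = (c:ℕ)+1 then (if Fin.init y = x' then Bc k m c else 0) else 0))
            = if (d:ℕ) = (c:ℕ)+1 then Bc k m c else 0 := by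
          intro c
          by_cases h : (d:ℕ) = (c:ℕ)+1 <;> simp [h]
        rw [Finset.sum_congr rfl fun c _ => h1 c]
        by_cases hd1 : 1 ≤ (d:ℕ)
        · rw [if_pos hd1, Finset.sum_eq_single (⟨(d:ℕ)-1, by omega⟩ : Fin (k+1))]
          · rw [if_pos (by simp; omega)]
          · intro c _ hne
            rw [if_neg]
            intro hdc
            apply hne
            apply Fin.ext
            simp
            omega
          · intro h; exact absurd (Finset.mem_univ _) h
        · rw [if_neg hd1]
          apply Finset.sum_eq_zero
          intro c _
          rw [if_neg (by omega)]
      have hsecond : ∑ c : Fin (k+1), ∑ x' : InvSeq k,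
          (if d = c then Ac k m c * Fl k (m - (c:ℕ)) x' (Fin.init y) else 0)
          = Ac k m (d:ℕ) * ∑ x' : InvSeq k, Fl k (m - (d:ℕ)) x' (Fin.init y) := by
        have h1 : ∀ c : Fin (k+1), (∑ x' : InvSeq k,
            (if d = c then Ac k m c * Fl k (m - (c:ℕ)) x' (Fin.init y) else 0))
            = if d = c then Ac k m c * ∑ x' : InvSeq k, Fl k (m - (c:ℕ)) x' (Fin.init y) else 0 := by
          intro c
          by_cases h : d = c <;> simp [h, Finset.mul_sum]
        rw [Finset.sum_congr rfl fun c _ => h1 c]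
        simp
      rw [hfirst, hsecond]
      by_cases hble : (d:ℕ) ≤ m
      · -- interior case
        have hb' : lev (Fin.init y) = (m - (d:ℕ)) + 1 := by omega
        have hch : (m - (d:ℕ)) + 1 ≤ k.choose 2 := hb' ▸ lev_le _
        have hlt : m - (d:ℕ) < k.choose 2 := by omega
        rw [flow_col k (m - (d:ℕ)) hlt (Fin.init y) hb']
        have haux : ((m - (d:ℕ) : ℕ) : ℤ) = (m:ℤ) - (d:ℕ) := cast_sub_of_le hble
        have haux2 : ((m - (d:ℕ) : ℕ) : ℤ) + 1 = (m:ℤ) + 1 - (d:ℕ) := by rw [haux]; ring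
        rw [haux2, haux]
        have hu1 : 0 < NN k ((m:ℤ) - (d:ℕ)) := by
          rw [← haux]
          exact NN_pos _ _ (by positivity) (by exact_mod_cast (by omega : m - (d:ℕ) ≤ k.choose 2))
        have hu2 : 0 < NN k ((m:ℤ) + 1 - (d:ℕ)) := by
          rw [← haux2, ← Nat.cast_add_one]
          exact NN_pos _ _ (by positivity) (by exact_mod_cast hch)
        have hu1r : (0:ℝ) < (NN k ((m:ℤ) - (d:ℕ)) : ℝ) := by exact_mod_cast hu1
        have hu2r : (0:ℝ) < (NN k ((m:ℤ) + 1 - (d:ℕ)) : ℝ) := by exact_mod_cast hu2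
        rcases Nat.eq_zero_or_pos (d:ℕ) with hd0 | hd1
        · rw [hd0] at hu1r hu2r ⊢
          simp only [Nat.cast_zero, sub_zero] at hu1r hu2r ⊢
          rw [if_neg (by norm_num), zero_add, Ac, Rr]
          simp only [Nat.cast_zero, sub_zero, Uf_zero]
          have e0 : Uf k ((m:ℤ)+1) (0+1) = NN k ((m:ℤ)+1) := by
            rw [Uf_succ, Uf_zero, zero_add]
            norm_num
          rw [e0]
          have h1ne : (NN k (m:ℤ) : ℝ) ≠ 0 := ne_of_gt hu1r
          have h2ne : (NN k ((m:ℤ)+1) : ℝ) ≠ 0 := ne_of_gt hu2r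
          have hVne : (NN (k+1) ((m:ℤ)+1) : ℝ) ≠ 0 := ne_of_gt hVr
          push_cast
          field_simp
          try ring
        · rw [if_pos (by omega : 1 ≤ (d:ℕ))]
          have hd' : ((d:ℕ)-1)+1 = (d:ℕ) := by omega
          have hcastd : (((d:ℕ)-1 : ℕ) : ℤ) = ((d:ℕ):ℤ) - 1 := cast_sub_of_le hd1
          have hden : (m:ℤ) - (((d:ℕ)-1 : ℕ) : ℤ) = (m:ℤ) + 1 - (d:ℕ) := by rw [hcastd]; ring
          have e1 : Uf k ((m:ℤ)+1) ((d:ℕ)+1) = Uf k ((m:ℤ)+1) (d:ℕ) + NN k ((m:ℤ)+1-(d:ℕ)) :=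
            Uf_succ k ((m:ℤ)+1) (d:ℕ)
          rw [Bc, Ac, hd', hden, e1, Rr]
          have h1ne : (NN k ((m:ℤ) - (d:ℕ)) : ℝ) ≠ 0 := ne_of_gt hu1r
          have h2ne : (NN k ((m:ℤ) + 1 - (d:ℕ)) : ℝ) ≠ 0 := ne_of_gt hu2r
          have hVne : (NN (k+1) ((m:ℤ)+1) : ℝ) ≠ 0 := ne_of_gt hVr
          push_cast
          field_simp
          ring
      · -- boundary case: d = m+1
        have hdm1 : (d:ℕ) = m + 1 := by omega
        have hmk : m + 1 ≤ k := by omega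
        have hlev0 : lev (Fin.init y) = 0 := by omega
        have hT : ∑ x' : InvSeq k, Fl k (m - (d:ℕ)) x' (Fin.init y) = 0 := by
          apply Finset.sum_eq_zero
          intro x' _
          apply flow_support
          intro hcov
          have := covers_lev hcov
          omega
        rw [hT, mul_zero, add_zero, if_pos (by omega), hdm1]
        have : m + 1 - 1 = m := by omega
        rw [this, Bc_col_top hmk, Rr]

lemma sum_Icc_int_eq_fin {M : Type*} [AddCommMonoid M] (g : ℤ → M) (k : ℕ) :
    ∑ l ∈ Finset.Icc (0:ℤ) k, g l = ∑ c : Fin (k+1), g ((c:ℕ):ℤ) := by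
  rw [Fin.sum_univ_eq_sum_range (fun i => g i) (k+1)]
  refine Finset.sum_nbij' (fun l => l.toNat) (fun i => (i:ℤ)) ?_ ?_ ?_ ?_ ?_
  · intro l hl
    simp only [Finset.mem_Icc] at hl
    simp only [Finset.mem_range]
    omega
  · intro i hi
    simp only [Finset.mem_range] at hi
    simp only [Finset.mem_Icc]
    omega
  · intro l hl
    simp only [Finset.mem_Icc] at hl
    show ((l.toNat : ℕ) : ℤ) = l
    omega
  · intro i _
    simp
  · intro l hl
    simp only [Finset.mem_Icc] at hl
    show g l = g ((l.toNat : ℕ) : ℤ)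
    congr 1
    omega

lemma card_level : ∀ (n m : ℕ),
    (Finset.univ.filter fun x : InvSeq n => lev x = m).card = NN n (m:ℤ)
  | 0, m => by
      have hall : ∀ x : InvSeq 0, lev x = 0 := fun x => by simp [lev]
      rcases Nat.eq_zero_or_pos m with h0 | hpos
      · subst h0
        have he : (Finset.univ.filter fun x : InvSeq 0 => lev x = 0) = Finset.univ := by
          ext x; simp [hall x]
        rw [he, Finset.card_univ]
        have h1 : NN 0 ((0:ℕ):ℤ) = 1 := by simp [NN]
        rw [h1]
        simp [Fintype.card_pi]
      · have he : (Finset.univ.filter fun x : InvSeq 0 => lev x = m) = ∅ := by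
          ext x
          simp only [Finset.mem_filter, Finset.mem_univ, true_and, Finset.notMem_empty, iff_false]
          rw [hall x]
          omega
        rw [he, Finset.card_empty]
        simp only [NN]
        rw [if_neg (by exact_mod_cast Nat.pos_iff_ne_zero.mp hpos)]
  | (k+1), m => by
      rw [Finset.card_filter]
      rw [sum_invseq_succ k (fun x => if lev x = m then (1:ℕ) else 0)]
      have hfib : ∀ c : Fin (k+1),
          (∑ x' : InvSeq k, if lev (Fin.snoc x' c : InvSeq (k+1)) = m then (1:ℕ) else 0)
          = NN k ((m:ℤ) - (c:ℕ)) := by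
        intro c
        have hrw : ∀ x' : InvSeq k, (if lev (Fin.snoc x' c : InvSeq (k+1)) = m then (1:ℕ) else 0)
            = if lev x' + (c:ℕ) = m then 1 else 0 := fun x' => by rw [lev_snoc]
        rw [Finset.sum_congr rfl fun x' _ => hrw x']
        rcases le_or_gt (c:ℕ) m with hcm | hcm
        · have h2 : ∀ x' : InvSeq k, (lev x' + (c:ℕ) = m) ↔ (lev x' = m - (c:ℕ)) :=
            fun x' => by omega
          rw [Finset.sum_congr rfl fun x' _ => by rw [if_congr (h2 x') rfl rfl]]
          rw [← Finset.card_filter]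
          rw [card_level k (m - (c:ℕ)), cast_sub_of_le hcm]
        · have h2 : ∀ x' : InvSeq k, ¬(lev x' + (c:ℕ) = m) := fun x' => by omega
          rw [Finset.sum_congr rfl fun x' _ => by rw [if_neg (h2 x')]]
          rw [Finset.sum_const, smul_zero]
          rw [NN_zero_of_neg k _ (by omega)]
      rw [Finset.sum_congr rfl fun c _ => hfib c]
      rw [NN, sum_Icc_int_eq_fin]

/-! ### The Lehmer code -/

def code {n : ℕ} (σ : Equiv.Perm (Fin n)) : InvSeq n := fun j =>
  ⟨(Finset.univ.filter fun i : Fin n => i < j ∧ σ j < σ i).card, by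
    have hsub : (Finset.univ.filter fun i : Fin n => i < j ∧ σ j < σ i) ⊆ Finset.Iio j := by
      intro i hi
      simp only [Finset.mem_filter] at hi
      exact Finset.mem_Iio.mpr hi.2.1
    have h1 := Finset.card_le_card hsub
    rw [Fin.card_Iio] at h1
    omega⟩

lemma code_sum {n : ℕ} (σ : Equiv.Perm (Fin n)) : lev (code σ) = invCount σ := by
  rw [invCount, Finset.card_eq_sum_card_fiberwise
    (f := fun p : Fin n × Fin n => p.2) (t := Finset.univ) (fun p _ => Finset.mem_univ _)]
  rw [lev]
  apply Finset.sum_congr rfl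
  intro j _
  show (Finset.univ.filter fun i : Fin n => i < j ∧ σ j < σ i).card = _
  symm
  apply Finset.card_bij (i := fun p _ => p.1)
  · intro p hp
    simp only [Finset.mem_filter, Finset.mem_univ, true_and] at hp ⊢
    obtain ⟨⟨h1, h2⟩, h3⟩ := hp
    exact ⟨h3 ▸ h1, h3 ▸ h2⟩
  · intro p1 hp1 p2 hp2 heq
    simp only [Finset.mem_filter, Finset.mem_univ, true_and] at hp1 hp2
    exact Prod.ext heq (hp1.2.trans hp2.2.symm)
  · intro i hi
    simp only [Finset.mem_filter, Finset.mem_univ, true_and] at hi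
    exact ⟨(i, j), by simp [hi.1, hi.2], rfl⟩

lemma count_gt {n : ℕ} (σ : Equiv.Perm (Fin n)) (j : Fin n) :
    (Finset.univ.filter fun i : Fin n => σ j < σ i).card = n - 1 - (σ j : ℕ) := by
  rw [← Fin.card_Ioi (σ j)]
  apply Finset.card_bij (i := fun i _ => σ i)
  · intro i hi
    simp only [Finset.mem_filter, Finset.mem_univ, true_and] at hi
    exact Finset.mem_Ioi.mpr hi
  · intro i1 _ i2 _ heq
    exact σ.injective heq
  · intro v hv
    refine ⟨σ.symm v, ?_, σ.apply_symm_apply v⟩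
    simp only [Finset.mem_filter, Finset.mem_univ, true_and]
    rw [σ.apply_symm_apply]
    exact Finset.mem_Ioi.mp hv

lemma split_gt {n : ℕ} (σ : Equiv.Perm (Fin n)) (j : Fin n) :
    (Finset.univ.filter fun i : Fin n => σ j < σ i).card
    = (Finset.univ.filter fun i : Fin n => i < j ∧ σ j < σ i).card
      + (Finset.univ.filter fun i : Fin n => j < i ∧ σ j < σ i).card := by
  rw [← Finset.card_union_of_disjoint]
  · congr 1
    rw [← Finset.filter_or]
    apply Finset.filter_congr
    intro i _
    constructor
    · intro h
      rcases lt_trichotomy i j with h1 | h1 | h1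
      · exact Or.inl ⟨h1, h⟩
      · exact absurd h (by rw [h1]; exact lt_irrefl _)
      · exact Or.inr ⟨h1, h⟩
    · rintro (⟨_, h⟩ | ⟨_, h⟩) <;> exact h
  · rw [Finset.disjoint_left]
    intro i hi1 hi2
    simp only [Finset.mem_filter] at hi1 hi2
    exact absurd (hi1.2.1.trans hi2.2.1) (lt_irrefl i)

lemma code_step {n : ℕ} (σ τ : Equiv.Perm (Fin n)) (j : Fin n)
    (hsuf : ∀ i : Fin n, j < i → σ i = τ i)
    (hcode : (Finset.univ.filter fun i : Fin n => i < j ∧ σ j < σ i).card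
           = (Finset.univ.filter fun i : Fin n => i < j ∧ τ j < τ i).card)
    (hlt : σ j < τ j) : False := by
  set I : Finset (Fin n) :=
    Finset.univ.filter (fun i : Fin n => j < i ∧ σ j < σ i ∧ σ i ≤ τ j) with hI
  -- split the suffix count for σ
  have h3 : (Finset.univ.filter fun i : Fin n => j < i ∧ σ j < σ i).card
      = (Finset.univ.filter fun i : Fin n => j < i ∧ τ j < σ i).card + I.card := by
    rw [← Finset.card_union_of_disjoint]
    · congr 1
      rw [hI, ← Finset.filter_or]
      apply Finset.filter_congr
      intro i _
      constructor
      · intro ⟨h1, h2⟩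
        by_cases hc : τ j < σ i
        · exact Or.inl ⟨h1, hc⟩
        · exact Or.inr ⟨h1, h2, not_lt.mp hc⟩
      · rintro (⟨h1, h2⟩ | ⟨h1, h2, _⟩)
        · exact ⟨h1, hlt.trans h2⟩
        · exact ⟨h1, h2⟩
    · rw [Finset.disjoint_left]
      intro i hi1 hi2
      simp only [hI, Finset.mem_filter] at hi1 hi2
      exact absurd hi1.2.2 (not_lt.mpr hi2.2.2.2)
  -- suffix counts for τ agree with σ-values
  have h5 : (Finset.univ.filter fun i : Fin n => j < i ∧ τ j < τ i).card
      = (Finset.univ.filter fun i : Fin n => j < i ∧ τ j < σ i).card := by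
    congr 1
    apply Finset.filter_congr
    intro i _
    constructor
    · intro ⟨h1, h2⟩; exact ⟨h1, (hsuf i h1) ▸ h2⟩
    · intro ⟨h1, h2⟩; exact ⟨h1, (hsuf i h1).symm ▸ h2⟩
  have e1 := split_gt σ j
  have e2 := split_gt τ j
  have f1 := count_gt σ j
  have f2 := count_gt τ j
  have hσlt : (σ j : ℕ) < n := (σ j).isLt
  have hτlt : (τ j : ℕ) < n := (τ j).isLt
  have hlt' : (σ j : ℕ) < (τ j : ℕ) := hlt
  -- conclude #I = τ j - σ j
  have hIcard : I.card = (τ j : ℕ) - (σ j : ℕ) := by omega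
  -- the image of I under σ fills Ioc (σ j) (τ j), so τ j is attained after j
  have himg : Finset.image σ I ⊆ Finset.Ioc (σ j) (τ j) := by
    intro v hv
    obtain ⟨i, hi, rfl⟩ := Finset.mem_image.mp hv
    simp only [hI, Finset.mem_filter] at hi
    exact Finset.mem_Ioc.mpr ⟨hi.2.2.1, hi.2.2.2⟩
  have hIoc : (Finset.Ioc (σ j) (τ j)).card = (τ j : ℕ) - (σ j : ℕ) := Fin.card_Ioc _ _
  have heq : Finset.image σ I = Finset.Ioc (σ j) (τ j) := by
    apply Finset.eq_of_subset_of_card_le himg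
    rw [hIoc, Finset.card_image_of_injective I σ.injective, hIcard]
  have hmem : τ j ∈ Finset.image σ I := by
    rw [heq]
    exact Finset.mem_Ioc.mpr ⟨hlt, le_refl _⟩
  obtain ⟨i, hi, hiv⟩ := Finset.mem_image.mp hmem
  simp only [hI, Finset.mem_filter] at hi
  have : τ i = τ j := by rw [← hsuf i hi.2.1, hiv]
  exact absurd (τ.injective this) (ne_of_gt hi.2.1)

lemma code_inj {n : ℕ} : Function.Injective (code (n := n)) := by
  intro σ τ h
  have hc : ∀ j, (Finset.univ.filter fun i : Fin n => i < j ∧ σ j < σ i).card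
      = (Finset.univ.filter fun i : Fin n => i < j ∧ τ j < τ i).card := by
    intro j
    exact congrArg Fin.val (congrFun h j)
  have main : ∀ t : ℕ, ∀ j : Fin n, n ≤ (j:ℕ) + t + 1 → σ j = τ j := by
    intro t
    induction t using Nat.strong_induction_on with
    | _ t ih =>
      intro j hj
      have hsuf : ∀ i : Fin n, j < i → σ i = τ i := by
        intro i hi
        have hij : (j:ℕ) < (i:ℕ) := hi
        have hin : (i:ℕ) < n := i.isLt
        rcases Nat.eq_zero_or_pos t with h0 | hpos
        · omega
        · exact ih (t-1) (by omega) i (by omega)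
      rcases lt_trichotomy (σ j) (τ j) with h1 | h2 | h3
      · exact (code_step σ τ j hsuf (hc j) h1).elim
      · exact h2
      · exact (code_step τ σ j (fun i hi => (hsuf i hi).symm) (hc j).symm h3).elim
  exact Equiv.ext fun j => main n j (by omega)

lemma prod_fin_factorial (n : ℕ) : ∏ i : Fin n, ((i:ℕ)+1) = n.factorial := by
  rw [Fin.prod_univ_eq_prod_range (fun i => i+1) n]
  exact Finset.prod_range_add_one_eq_factorial n

lemma card_invseq (n : ℕ) : Fintype.card (InvSeq n) = n.factorial := by
  rw [Fintype.card_pi]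
  simp only [Fintype.card_fin]
  exact prod_fin_factorial n

lemma s_eq_NN (n m : ℕ) (hm : m ≤ n.choose 2) : s n m = NN n (m:ℤ) := by
  classical
  have hle : ∀ m' : ℕ, s n m' ≤ (Finset.univ.filter fun x : InvSeq n => lev x = m').card := by
    intro m'
    apply Finset.card_le_card_of_injOn code
    · intro σ hσ
      simp only [Finset.mem_coe, Finset.mem_filter, Finset.mem_univ, true_and] at hσ ⊢
      rw [code_sum]
      exact hσ
    · intro σ _ τ _ hcd
      exact code_inj hcd
  have hinv_le : ∀ σ : Equiv.Perm (Fin n), invCount σ ≤ n.choose 2 := by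
    intro σ
    rw [← code_sum σ]
    exact lev_le _
  have h1 : ∑ m' ∈ Finset.range (n.choose 2 + 1), s n m' = n.factorial := by
    have h := Finset.card_eq_sum_card_fiberwise
      (f := invCount) (s := (Finset.univ : Finset (Equiv.Perm (Fin n))))
      (t := Finset.range (n.choose 2 + 1))
      (fun σ _ => Finset.mem_range.mpr (Nat.lt_succ_of_le (hinv_le σ)))
    rw [Finset.card_univ, Fintype.card_perm, Fintype.card_fin] at h
    exact h.symm
  have h2 : ∑ m' ∈ Finset.range (n.choose 2 + 1),
      (Finset.univ.filter fun x : InvSeq n => lev x = m').card = n.factorial := by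
    have h := Finset.card_eq_sum_card_fiberwise
      (f := lev) (s := (Finset.univ : Finset (InvSeq n)))
      (t := Finset.range (n.choose 2 + 1))
      (fun x _ => Finset.mem_range.mpr (Nat.lt_succ_of_le (lev_le x)))
    rw [Finset.card_univ, card_invseq] at h
    exact h.symm
  have hall := (Finset.sum_eq_sum_iff_of_le (fun m' _ => hle m')).mp (h1.trans h2.symm)
  have hmem : m ∈ Finset.range (n.choose 2 + 1) := Finset.mem_range.mpr (by omega)
  rw [hall m hmem, card_level]

end TM

/-- For every `n ≥ 2` and `0 ≤ m < C(n,2)` there is a transition matrix from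
inversion sequences of sum `m` to those of sum `m+1` with nonnegative entries,
supported on covering pairs, all row sums `1`, and all column sums
`s(n,m)/s(n,m+1)`. -/
theorem transition_matrix_exists (n m : ℕ) (hn : 2 ≤ n) (hm : m < n.choose 2) :
    ∃ ρ : {x : InvSeq n // ∑ i : Fin n, (x i : ℕ) = m} →
          {y : InvSeq n // ∑ i : Fin n, (y i : ℕ) = m + 1} → ℝ,
      (∀ x y, 0 ≤ ρ x y) ∧
      (∀ x y, ¬ Covers x.1 y.1 → ρ x y = 0) ∧
      (∀ x, ∑ y, ρ x y = 1) ∧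
      (∀ y, ∑ x, ρ x y = (s n m : ℝ) / (s n (m + 1) : ℝ)) := by
  classical
  refine ⟨fun x y => TM.Fl n m x.1 y.1, ?_, ?_, ?_, ?_⟩
  · intro x y
    exact TM.flow_nonneg n m hm x.1 y.1 x.2
  · intro x y h
    exact TM.flow_support n m x.1 y.1 h
  · intro x
    have hrow := TM.flow_row n m hm x.1 x.2
    calc ∑ y : {y : InvSeq n // ∑ i : Fin n, (y i : ℕ) = m + 1}, TM.Fl n m x.1 y.1
        = ∑ y ∈ Finset.univ.filter (fun y : InvSeq n => TM.lev y = m + 1), TM.Fl n m x.1 y := by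
          rw [Finset.sum_subtype (p := fun y : InvSeq n => ∑ i : Fin n, (y i : ℕ) = m + 1) (Finset.univ.filter (fun y : InvSeq n => TM.lev y = m + 1))
            (fun y => by rw [Finset.mem_filter]; exact ⟨fun h => h.2, fun h => ⟨Finset.mem_univ _, h⟩⟩) (fun y => TM.Fl n m x.1 y)]
      _ = ∑ y : InvSeq n, TM.Fl n m x.1 y := by
          apply Finset.sum_filter_of_ne
          intro y _ hne
          have hcov : Covers x.1 y := by
            by_contra hc
            exact hne (TM.flow_support n m x.1 y hc)
          have h1 := TM.covers_lev hcov
          have h2 : TM.lev x.1 = m := x.2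
          omega
      _ = 1 := hrow
  · intro y
    have hcol := TM.flow_col n m hm y.1 y.2
    have hs1 : (s n m : ℝ) = (TM.NN n (m:ℤ) : ℝ) := by
      rw [TM.s_eq_NN n m (le_of_lt hm)]
    have hs2 : (s n (m+1) : ℝ) = (TM.NN n ((m:ℤ)+1) : ℝ) := by
      rw [TM.s_eq_NN n (m+1) (by omega)]
      norm_num
    rw [hs1, hs2]
    calc ∑ x : {x : InvSeq n // ∑ i : Fin n, (x i : ℕ) = m}, TM.Fl n m x.1 y.1
        = ∑ x ∈ Finset.univ.filter (fun x : InvSeq n => TM.lev x = m), TM.Fl n m x y.1 := by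
          rw [Finset.sum_subtype (p := fun x : InvSeq n => ∑ i : Fin n, (x i : ℕ) = m) (Finset.univ.filter (fun x : InvSeq n => TM.lev x = m))
            (fun x => by rw [Finset.mem_filter]; exact ⟨fun h => h.2, fun h => ⟨Finset.mem_univ _, h⟩⟩) (fun x => TM.Fl n m x y.1)]
      _ = ∑ x : InvSeq n, TM.Fl n m x y.1 := by
          apply Finset.sum_filter_of_ne
          intro x _ hne
          have hcov : Covers x y.1 := by
            by_contra hc
            exact hne (TM.flow_support n m x y.1 hc)
          have h1 := TM.covers_lev hcov
          have h2 : TM.lev y.1 = m + 1 := y.2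
          omega
      _ = _ := hcol
end

section
/- Suppose there exists a stochastic transition matrix ρ_{n,m} (nonnegative, supported on covering pairs, row sums 1, column sums s(n,m)/s(n,m+1)) from inversion sequences of sum m to those of sum m+1. Then there also exists such a matrix ρ_{n,m̃} for m̃ = C(n,2) − 1 − m, given by ρ_{n,m̃}(x,y) = ρ_{n,m}(y′,x′) · s(n,m+1)/s(n,m), where z′ denotes the complemented sequence (0−z_1, 1−z_2, ..., (n−1)−z_n). -/
/-- The complemented sequence `z' = (0 - z_1, 1 - z_2, …, (n-1) - z_n)`. -/
def compSeq {n : ℕ} (x : InvSeq n) : InvSeq n :=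
  fun i => ⟨(i : ℕ) - (x i : ℕ), Nat.lt_succ_of_le (Nat.sub_le _ _)⟩

lemma sum_compSeq {n : ℕ} (x : InvSeq n) :
    (∑ i : Fin n, ((compSeq x i : ℕ))) = n.choose 2 - ∑ i : Fin n, (x i : ℕ) := by
  have h1 : (∑ i : Fin n, ((compSeq x i : ℕ)))
      = (∑ i : Fin n, (i : ℕ)) - ∑ i : Fin n, (x i : ℕ) := by
    rw [eq_tsub_iff_add_eq_of_le (Finset.sum_le_sum (fun i _ => Fin.is_le (x i)))]
    rw [← Finset.sum_add_distrib]
    exact Finset.sum_congr rfl fun i _ =>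
      Nat.sub_add_cancel (Fin.is_le (x i))
  rw [h1, Fin.sum_univ_eq_sum_range (fun i => i), Finset.sum_range_id, Nat.choose_two_right]

lemma card_pairs (n : ℕ) :
    (Finset.univ.filter (fun p : Fin n × Fin n => p.1 < p.2)).card = n.choose 2 := by
  rw [Finset.card_filter, ← Finset.univ_product_univ, Finset.sum_product_right]
  simp only [← Finset.card_filter]
  have h : ∀ j : Fin n, (Finset.univ.filter (fun i : Fin n => i < j)).card = (j : ℕ) := by
    intro j
    rw [show Finset.univ.filter (fun i : Fin n => i < j) = Finset.Iio j by ext i; simp, Fin.card_Iio]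
  simp only [h]
  rw [Fin.sum_univ_eq_sum_range (fun i => i), Finset.sum_range_id, Nat.choose_two_right]

lemma invCount_le {n : ℕ} (σ : Equiv.Perm (Fin n)) : invCount σ ≤ n.choose 2 := by
  rw [← card_pairs n]
  apply Finset.card_le_card
  intro p hp
  simp only [Finset.mem_filter] at *
  tauto

lemma invCount_rev {n : ℕ} (σ : Equiv.Perm (Fin n)) :
    invCount σ + invCount (σ * Fin.revPerm) = n.choose 2 := by
  have h1 : invCount (σ * Fin.revPerm)
      = (Finset.univ.filter (fun p : Fin n × Fin n => p.1 < p.2 ∧ σ p.1 < σ p.2)).card := by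
    apply Finset.card_nbij' (i := fun p => (p.2.rev, p.1.rev)) (j := fun p => (p.2.rev, p.1.rev))
    · intro p hp
      simp only [Finset.mem_coe, Finset.mem_filter, Finset.mem_univ, true_and] at *
      obtain ⟨g1, g2⟩ := hp
      exact ⟨Fin.rev_lt_rev.mpr g1, by simpa [Equiv.Perm.mul_apply] using g2⟩
    · intro p hp
      simp only [Finset.mem_coe, Finset.mem_filter, Finset.mem_univ, true_and] at *
      obtain ⟨g1, g2⟩ := hp
      refine ⟨Fin.rev_lt_rev.mpr g1, ?_⟩
      simpa [Equiv.Perm.mul_apply, Fin.rev_rev] using g2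
    · intro p hp; simp [Fin.rev_rev]
    · intro p hp; simp [Fin.rev_rev]
  have key := Finset.card_filter_add_card_filter_not
    (s := Finset.univ.filter (fun p : Fin n × Fin n => p.1 < p.2))
    (p := fun p => σ p.2 < σ p.1)
  rw [Finset.filter_filter, Finset.filter_filter] at key
  have e2 : Finset.univ.filter (fun p : Fin n × Fin n => p.1 < p.2 ∧ ¬ σ p.2 < σ p.1)
      = Finset.univ.filter (fun p : Fin n × Fin n => p.1 < p.2 ∧ σ p.1 < σ p.2) := by
    apply Finset.filter_congr
    intro p _
    constructor
    · rintro ⟨g1, g2⟩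
      have hne : σ p.1 ≠ σ p.2 := fun h => absurd (σ.injective h) (ne_of_lt g1)
      exact ⟨g1, lt_of_le_of_ne (not_lt.mp g2) hne⟩
    · rintro ⟨g1, g2⟩; exact ⟨g1, not_lt.mpr g2.le⟩
  rw [e2] at key
  rw [h1, invCount, ← card_pairs n, ← key]

lemma compSeq_compSeq {n : ℕ} (x : InvSeq n) : compSeq (compSeq x) = x := by
  funext i
  have := Fin.is_le (x i)
  apply Fin.ext
  simp only [compSeq]
  omega

lemma covers_compSeq {n : ℕ} {x y : InvSeq n} (h : Covers (compSeq y) (compSeq x)) :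
    Covers x y := by
  obtain ⟨j, hj, hij⟩ := h
  refine ⟨j, ?_, ?_⟩
  · have h1 := Fin.is_le (x j)
    have h2 := Fin.is_le (y j)
    simp only [compSeq] at hj
    omega
  · intro i hi
    have := hij i hi
    have h1 := Fin.is_le (x i)
    have h2 := Fin.is_le (y i)
    simp only [compSeq, Fin.mk.injEq] at this
    apply Fin.ext
    omega

lemma exists_invSeq (n : ℕ) : ∀ m, m ≤ n.choose 2 →
    ∃ x : InvSeq n, ∑ i : Fin n, (x i : ℕ) = m := by
  intro m
  induction m with
  | zero => exact fun _ => ⟨fun i => ⟨0, Nat.succ_pos _⟩, by simp⟩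
  | succ m ih =>
    intro hm
    obtain ⟨x, hx⟩ := ih (by omega)
    have hsumi : ∑ i : Fin n, (i : ℕ) = n.choose 2 := by
      rw [Fin.sum_univ_eq_sum_range (fun i => i), Finset.sum_range_id, Nat.choose_two_right]
    have : ∃ j : Fin n, (x j : ℕ) < (j : ℕ) := by
      by_contra hc
      push_neg at hc
      have : ∑ i : Fin n, (x i : ℕ) = ∑ i : Fin n, (i : ℕ) :=
        Finset.sum_congr rfl fun i _ => le_antisymm (Fin.is_le _) (hc i)
      omega
    obtain ⟨j, hj⟩ := this
    refine ⟨fun i => if h : i = j then ⟨(x i : ℕ) + 1, by subst h; omega⟩ else x i, ?_⟩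
    have : ∀ i : Fin n, ((if h : i = j then (⟨(x i : ℕ) + 1, by subst h; omega⟩ : Fin ((i:ℕ)+1)) else x i : Fin ((i:ℕ)+1)) : ℕ)
        = (x i : ℕ) + if i = j then 1 else 0 := by
      intro i
      by_cases h : i = j <;> simp [h]
    simp only [this, Finset.sum_add_distrib, Finset.sum_ite_eq' Finset.univ j, Finset.mem_univ,
      if_true, hx]

lemma s_symm (n k : ℕ) (hk : k ≤ n.choose 2) : s n k = s n (n.choose 2 - k) := by
  unfold s
  apply Finset.card_nbij' (i := fun σ => σ * Fin.revPerm) (j := fun σ => σ * Fin.revPerm)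
  · intro σ hσ
    simp only [Finset.mem_coe, Finset.mem_filter, Finset.mem_univ, true_and] at *
    have := invCount_rev σ
    omega
  · intro σ hσ
    simp only [Finset.mem_coe, Finset.mem_filter, Finset.mem_univ, true_and] at *
    have := invCount_rev σ
    have hle := invCount_le σ
    omega
  · intro σ _
    ext x
    simp [Equiv.Perm.mul_apply, Fin.rev_rev]
  · intro σ _
    ext x
    simp [Equiv.Perm.mul_apply, Fin.rev_rev]

/-- If a stochastic transition matrix `ρ` exists for `(n, m)`, then the matrix
`ρ'(x,y) = ρ(y', x')·s(n,m+1)/s(n,m)` (where `z'` is the complemented sequence)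
is such a matrix for `(n, m̃)` with `m̃ = C(n,2) - 1 - m`. -/
theorem transition_matrix_transfer (n m : ℕ) (hm : m < n.choose 2)
    (ρ : {x : InvSeq n // ∑ i : Fin n, (x i : ℕ) = m} →
         {y : InvSeq n // ∑ i : Fin n, (y i : ℕ) = m + 1} → ℝ)
    (hnonneg : ∀ x y, 0 ≤ ρ x y)
    (hsupp : ∀ x y, ¬ Covers x.1 y.1 → ρ x y = 0)
    (hrow : ∀ x, ∑ y, ρ x y = 1)
    (hcol : ∀ y, ∑ x, ρ x y = (s n m : ℝ) / (s n (m + 1) : ℝ)) :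
    ∃ ρ' : {x : InvSeq n // ∑ i : Fin n, (x i : ℕ) = n.choose 2 - 1 - m} →
           {y : InvSeq n // ∑ i : Fin n, (y i : ℕ) = (n.choose 2 - 1 - m) + 1} → ℝ,
      (∀ x y, ρ' x y =
        ρ ⟨compSeq y.1, by have := sum_compSeq y.1; have := y.2; omega⟩
          ⟨compSeq x.1, by have := sum_compSeq x.1; have := x.2; omega⟩
          * ((s n (m + 1) : ℝ) / (s n m : ℝ))) ∧
      (∀ x y, 0 ≤ ρ' x y) ∧
      (∀ x y, ¬ Covers x.1 y.1 → ρ' x y = 0) ∧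
      (∀ x, ∑ y, ρ' x y = 1) ∧
      (∀ y, ∑ x, ρ' x y =
        (s n (n.choose 2 - 1 - m) : ℝ) / (s n ((n.choose 2 - 1 - m) + 1) : ℝ)) := by
  classical
  -- nonemptiness and positivity
  obtain ⟨x0, hx0⟩ := exists_invSeq n m (le_of_lt hm)
  haveI : Nonempty {x : InvSeq n // ∑ i : Fin n, (x i : ℕ) = m} := ⟨⟨x0, hx0⟩⟩
  have hcardX : (0:ℝ) < Fintype.card {x : InvSeq n // ∑ i : Fin n, (x i : ℕ) = m} := by
    exact_mod_cast Fintype.card_pos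
  have hdouble : (Fintype.card {x : InvSeq n // ∑ i : Fin n, (x i : ℕ) = m} : ℝ)
      = (Fintype.card {y : InvSeq n // ∑ i : Fin n, (y i : ℕ) = m + 1} : ℝ)
        * ((s n m : ℝ) / (s n (m + 1) : ℝ)) := by
    calc (Fintype.card {x : InvSeq n // ∑ i : Fin n, (x i : ℕ) = m} : ℝ)
        = ∑ x, ∑ y, ρ x y := by
          simp [hrow, Finset.card_univ]
      _ = ∑ y, ∑ x, ρ x y := Finset.sum_comm
      _ = ∑ _y : {y : InvSeq n // ∑ i : Fin n, (y i : ℕ) = m + 1},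
            (s n m : ℝ) / (s n (m + 1) : ℝ) := by
          exact Finset.sum_congr rfl fun y _ => hcol y
      _ = _ := by rw [Finset.sum_const, nsmul_eq_mul, Finset.card_univ]
  have hsm1 : s n (m + 1) ≠ 0 := by
    intro h
    rw [h] at hdouble
    simp at hdouble
  have hsm : s n m ≠ 0 := by
    intro h
    rw [h] at hdouble
    simp at hdouble
  have hsmR : (s n m : ℝ) ≠ 0 := Nat.cast_ne_zero.mpr hsm
  have hsm1R : (s n (m + 1) : ℝ) ≠ 0 := Nat.cast_ne_zero.mpr hsm1
  -- the equivalences given by complementation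
  let F : {y : InvSeq n // ∑ i : Fin n, (y i : ℕ) = (n.choose 2 - 1 - m) + 1}
      ≃ {x : InvSeq n // ∑ i : Fin n, (x i : ℕ) = m} :=
    { toFun := fun y => ⟨compSeq y.1, by have := sum_compSeq y.1; have := y.2; omega⟩
      invFun := fun a => ⟨compSeq a.1, by have := sum_compSeq a.1; have := a.2; omega⟩
      left_inv := fun y => Subtype.ext (compSeq_compSeq y.1)
      right_inv := fun a => Subtype.ext (compSeq_compSeq a.1) }
  let E : {x : InvSeq n // ∑ i : Fin n, (x i : ℕ) = n.choose 2 - 1 - m}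
      ≃ {y : InvSeq n // ∑ i : Fin n, (y i : ℕ) = m + 1} :=
    { toFun := fun x => ⟨compSeq x.1, by have := sum_compSeq x.1; have := x.2; omega⟩
      invFun := fun b => ⟨compSeq b.1, by have := sum_compSeq b.1; have := b.2; omega⟩
      left_inv := fun x => Subtype.ext (compSeq_compSeq x.1)
      right_inv := fun b => Subtype.ext (compSeq_compSeq b.1) }
  refine ⟨fun x y =>
    ρ ⟨compSeq y.1, by have := sum_compSeq y.1; have := y.2; omega⟩
      ⟨compSeq x.1, by have := sum_compSeq x.1; have := x.2; omega⟩
      * ((s n (m + 1) : ℝ) / (s n m : ℝ)),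
    fun x y => rfl, ?_, ?_, ?_, ?_⟩
  · intro x y
    exact mul_nonneg (hnonneg _ _) (div_nonneg (Nat.cast_nonneg _) (Nat.cast_nonneg _))
  · intro x y h
    show ρ (F y) (E x) * ((s n (m + 1) : ℝ) / (s n m : ℝ)) = 0
    rw [hsupp (F y) (E x) (fun hc => h (covers_compSeq hc)), zero_mul]
  · intro x
    rw [← Finset.sum_mul]
    show (∑ y, ρ (F y) (E x)) * ((s n (m + 1) : ℝ) / (s n m : ℝ)) = 1
    rw [Equiv.sum_comp F (fun a => ρ a (E x)), hcol]
    field_simp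
  · intro y
    rw [← Finset.sum_mul]
    have h1 : (∑ x, ρ (F y) (E x)) = 1 := by
      rw [Equiv.sum_comp E (fun b => ρ (F y) b)]
      exact hrow (F y)
    show (∑ x, ρ (F y) (E x)) * ((s n (m + 1) : ℝ) / (s n m : ℝ)) = _
    rw [h1, one_mul]
    have e1 : s n (n.choose 2 - 1 - m) = s n (m + 1) := by
      rw [s_symm n (m + 1) hm]
      congr 1
      omega
    have e2 : s n (n.choose 2 - 1 - m + 1) = s n m := by
      rw [s_symm n m (le_of_lt hm)]
      congr 1
      omega
    rw [e1, e2]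
end

section
/- For all n and 0 ≤ m < C(n,2), the probability that a uniformly random permutation of [n] with m inversions is indecomposable is at most the probability that a uniformly random permutation of [n] with m+1 inversions is indecomposable. -/
open Finset

open scoped Classical in
noncomputable def boxF {n : ℕ} (b : Fin n → ℕ) (s : Finset (Fin n)) : Finset (Fin n → ℕ) :=
  Fintype.piFinset (fun i => if i ∈ s then Finset.range (b i) else {0})

open scoped Classical in
noncomputable def cnt {n : ℕ} (b : Fin n → ℕ) (s : Finset (Fin n))
    (P : (Fin n → ℕ) → Prop) (z : ℤ) : ℕ :=
  ((boxF b s).filter (fun L => P L ∧ (∑ i, (L i : ℤ)) = z)).card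

lemma mem_boxF {n : ℕ} {b : Fin n → ℕ} {s : Finset (Fin n)} {L : Fin n → ℕ} :
    L ∈ boxF b s ↔ ∀ i, (i ∈ s → L i < b i) ∧ (i ∉ s → L i = 0) := by
  classical
  simp only [boxF, Fintype.mem_piFinset]
  refine forall_congr' fun i => ?_
  by_cases h : i ∈ s <;> simp [h]

lemma sum_cast_update {n : ℕ} (L : Fin n → ℕ) (j : Fin n) (a : ℕ) :
    ∑ i, (Function.update L j a i : ℤ) = a + (∑ i, (L i : ℤ)) - L j := by
  classical
  have h : (fun i => (Function.update L j a i : ℤ)) = Function.update (fun i => (L i : ℤ)) j a := by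
    funext i
    by_cases hij : i = j
    · subst hij; simp
    · simp [Function.update_of_ne hij]
  calc ∑ i, (Function.update L j a i : ℤ) = ∑ i, Function.update (fun i => (L i : ℤ)) j a i := by rw [h]
    _ = a + ∑ i ∈ Finset.univ \ {j}, (L i : ℤ) := Finset.sum_update_of_mem (Finset.mem_univ j) _ _
    _ = a + (∑ i, (L i : ℤ)) - L j := by
        rw [Finset.sum_sdiff_eq_sub (by simp)]
        simp; ring

lemma cnt_conv {n : ℕ} {b : Fin n → ℕ} {s : Finset (Fin n)} {j : Fin n} (hj : j ∉ s)
    (P : (Fin n → ℕ) → Prop) (z : ℤ) :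
    cnt b (insert j s) P z
      = ∑ t ∈ Finset.range (b j), cnt b s (fun L => P (Function.update L j t)) (z - t) := by
  classical
  unfold cnt
  rw [Finset.card_eq_sum_card_fiberwise (f := fun L => L j)
    (t := Finset.range (b j)) ?hmem]
  case hmem =>
    intro L hL
    simp only [Finset.mem_coe, Finset.mem_filter] at hL
    have := (mem_boxF.mp hL.1 j).1 (Finset.mem_insert_self j s)
    simpa using this
  refine Finset.sum_congr rfl fun t ht => ?_
  apply Finset.card_nbij' (fun L => Function.update L j 0) (fun L => Function.update L j t)
  · -- forward membership
    intro L hL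
    simp only [Finset.mem_coe, Finset.mem_filter] at hL ⊢
    obtain ⟨⟨hbox, hP, hsum⟩, hLj⟩ := hL
    have hidem : Function.update (Function.update L j 0) j t = L := by
      rw [Function.update_idem, ← hLj, Function.update_eq_self]
    refine ⟨?_, ?_, ?_⟩
    · rw [mem_boxF]
      intro i
      constructor
      · intro hi
        have hij : i ≠ j := fun h => hj (h ▸ hi)
        rw [Function.update_of_ne hij]
        exact (mem_boxF.mp hbox i).1 (Finset.mem_insert_of_mem hi)
      · intro hi
        by_cases hij : i = j
        · subst hij; simp
        · rw [Function.update_of_ne hij]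
          exact (mem_boxF.mp hbox i).2 (by simp [hij, hi])
    · rw [hidem]; exact hP
    · rw [sum_cast_update, hLj, hsum]; push_cast; ring
  · -- backward membership
    intro L hL
    simp only [Finset.mem_coe, Finset.mem_filter] at hL ⊢
    obtain ⟨hbox, hP, hsum⟩ := hL
    have hLj : L j = 0 := (mem_boxF.mp hbox j).2 hj
    refine ⟨⟨?_, hP, ?_⟩, by simp⟩
    · rw [mem_boxF]
      intro i
      constructor
      · intro hi
        rcases Finset.mem_insert.mp hi with hij | hi'
        · subst hij; simpa using Finset.mem_range.mp ht
        · have hij : i ≠ j := fun h => hj (h ▸ hi')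
          rw [Function.update_of_ne hij]
          exact (mem_boxF.mp hbox i).1 hi'
      · intro hi
        have hij : i ≠ j := fun h => hi (h ▸ Finset.mem_insert_self j s)
        rw [Function.update_of_ne hij]
        exact (mem_boxF.mp hbox i).2 (fun h' => hi (Finset.mem_insert_of_mem h'))
    · rw [sum_cast_update, hLj, hsum]; push_cast; ring
  · intro L hL
    simp only [Finset.mem_coe, Finset.mem_filter] at hL
    beta_reduce
    rw [Function.update_idem, ← hL.2, Function.update_eq_self]
  · intro L hL
    simp only [Finset.mem_coe, Finset.mem_filter] at hL
    have hLj : L j = 0 := (mem_boxF.mp hL.1 j).2 hj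
    beta_reduce
    rw [Function.update_idem, ← hLj, Function.update_eq_self]

/-- TP2 / log-concavity property of a sequence. -/
def TP2 (f : ℤ → ℚ) : Prop := ∀ x y d : ℤ, x ≤ y → 0 ≤ d → f x * f (y + d) ≤ f (x + d) * f y

lemma boxF_empty {n : ℕ} (b : Fin n → ℕ) : boxF b (∅ : Finset (Fin n)) = {fun _ => 0} := by
  classical
  ext L
  simp only [mem_boxF, Finset.mem_singleton]
  constructor
  · intro h; funext i; exact (h i).2 (by simp)
  · intro h; subst h; intro i; simp

open scoped Classical in
lemma cnt_empty {n : ℕ} (b : Fin n → ℕ) (P : (Fin n → ℕ) → Prop) (z : ℤ) :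
    cnt b (∅ : Finset (Fin n)) P z = if P (fun _ => 0) ∧ z = 0 then 1 else 0 := by
  classical
  unfold cnt
  rw [boxF_empty]
  by_cases h : P (fun _ => 0) ∧ z = 0
  · rw [if_pos h, Finset.filter_singleton, if_pos ⟨h.1, by simp [h.2]⟩, Finset.card_singleton]
  · rw [if_neg h, Finset.filter_singleton]
    rw [if_neg, Finset.card_empty]
    intro hc
    exact h ⟨hc.1, by simpa using hc.2.symm⟩

lemma sum_int_Ico_eq_range (F : ℤ → ℚ) (c : ℤ) (b : ℕ) :
    ∑ k ∈ Finset.Ico c (c + b), F k = ∑ t ∈ Finset.range b, F (c + t) := by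
  induction b with
  | zero => simp
  | succ b ih =>
    have hins : Finset.Ico c (c + ((b : ℤ) + 1)) = insert (c + b) (Finset.Ico c (c + b)) := by
      ext k
      simp only [Finset.mem_Ico, Finset.mem_insert]
      omega
    have : (((b : ℕ) + 1 : ℕ) : ℤ) = (b : ℤ) + 1 := by push_cast; ring
    rw [this, hins, Finset.sum_insert (by simp), Finset.sum_range_succ, ih]
    push_cast
    ring

lemma pairify (K : Finset ℤ) (F : ℤ → ℤ → ℚ) (hdiag : ∀ k ∈ K, F k k = 0) :
    ∑ k ∈ K, ∑ l ∈ K, F k l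
      = ∑ k ∈ K, ∑ l ∈ K.filter (fun l => k < l), (F k l + F l k) := by
  classical
  have hsplit : ∀ k ∈ K, ∑ l ∈ K, F k l
      = ∑ l ∈ K.filter (fun l => k < l), F k l + ∑ l ∈ K.filter (fun l => l < k), F k l := by
    intro k hk
    rw [← Finset.sum_filter_add_sum_filter_not K (fun l => k < l)]
    congr 1
    have : K.filter (fun l => ¬ k < l) = insert k (K.filter (fun l => l < k)) := by
      ext l
      simp only [Finset.mem_filter, Finset.mem_insert]
      constructor
      · rintro ⟨hl, hnl⟩
        rcases eq_or_lt_of_le (le_of_not_gt hnl) with h | h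
        · exact Or.inl h
        · exact Or.inr ⟨hl, h⟩
      · intro h
        rcases h with h | ⟨hl, hlt⟩
        · subst h; exact ⟨hk, lt_irrefl _⟩
        · exact ⟨hl, not_lt.mpr hlt.le⟩
    rw [this, Finset.sum_insert (by simp), hdiag k hk, zero_add]
  rw [Finset.sum_congr rfl hsplit, Finset.sum_add_distrib]
  have hswap : ∑ k ∈ K, ∑ l ∈ K.filter (fun l => l < k), F k l
      = ∑ k ∈ K, ∑ l ∈ K.filter (fun l => k < l), F l k := by
    rw [Finset.sum_comm' (s' := fun l => K.filter (fun k => l < k)) (t' := K)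
      (by intro x y; simp only [Finset.mem_filter]; tauto)]
  rw [hswap, ← Finset.sum_add_distrib]
  congr 1
  ext k
  rw [← Finset.sum_add_distrib]

theorem tp2_N {n : ℕ} (b : Fin n → ℕ) (s : Finset (Fin n)) :
    TP2 (fun z => (cnt b s (fun _ => True) z : ℚ)) := by
  classical
  induction s using Finset.induction_on with
  | empty =>
    intro x y d hxy hd
    simp only [cnt_empty, true_and]
    by_cases hx : x = 0 <;> by_cases hyd : y + d = 0
    · have hy : y = 0 := by omega
      have hd0 : d = 0 := by omega
      simp [hx, hy, hd0]
    · simp [hyd]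
      positivity
    · simp [hx]
      positivity
    · simp [hx]
      positivity
  | @insert j s hj ih =>
    intro x y d hxy hd
    have fnn : ∀ z, (0:ℚ) ≤ (cnt b s (fun _ => True) z : ℚ) := fun z => by positivity
    set f : ℤ → ℚ := fun z => (cnt b s (fun _ => True) z : ℚ) with hf
    set bj : ℕ := b j with hbj
    have hconv : ∀ z : ℤ, ((cnt b (insert j s) (fun _ => True) z : ℕ) : ℚ)
        = ∑ t ∈ Finset.range bj, f (z - t) := by
      intro z
      rw [cnt_conv hj]
      push_cast
      rfl
    set K : Finset ℤ := Finset.Ico (-(d:ℤ)) (bj : ℤ) with hK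
    set c₁ : ℤ → ℚ := fun k => if 0 ≤ k then 1 else 0 with hc₁
    set c₂ : ℤ → ℚ := fun k => if k < (bj:ℤ) - d then 1 else 0 with hc₂
    have hg1 : ∀ z : ℤ, ((cnt b (insert j s) (fun _ => True) z : ℕ) : ℚ)
        = ∑ k ∈ K, c₁ k * f (z - k) := by
      intro z
      rw [hconv z]
      have h1 : ∑ k ∈ K, c₁ k * f (z - k) = ∑ k ∈ K.filter (fun k => 0 ≤ k), f (z - k) := by
        rw [Finset.sum_filter]
        refine Finset.sum_congr rfl fun k _ => ?_
        by_cases h : (0:ℤ) ≤ k <;> simp [hc₁, h]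
      have h2 : K.filter (fun k => 0 ≤ k) = Finset.Ico (0:ℤ) (bj:ℤ) := by
        ext k
        simp only [hK, Finset.mem_filter, Finset.mem_Ico]
        omega
      have h3 : Finset.Ico (0:ℤ) (bj:ℤ) = Finset.Ico (0:ℤ) (0 + bj) := by rw [zero_add]
      rw [h1, h2, h3, sum_int_Ico_eq_range (fun k => f (z - k)) 0 bj]
      refine Finset.sum_congr rfl fun t _ => ?_
      congr 1
      ring
    have hg2 : ∀ z : ℤ, ((cnt b (insert j s) (fun _ => True) (z + d) : ℕ) : ℚ)
        = ∑ k ∈ K, c₂ k * f (z - k) := by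
      intro z
      rw [hconv (z + d)]
      have h1 : ∑ k ∈ K, c₂ k * f (z - k)
          = ∑ k ∈ K.filter (fun k => k < (bj:ℤ) - d), f (z - k) := by
        rw [Finset.sum_filter]
        refine Finset.sum_congr rfl fun k _ => ?_
        by_cases h : k < (bj:ℤ) - d <;> simp [hc₂, h]
      have h2 : K.filter (fun k => k < (bj:ℤ) - d) = Finset.Ico (-(d:ℤ)) (-(d:ℤ) + bj) := by
        ext k
        simp only [hK, Finset.mem_filter, Finset.mem_Ico]
        omega
      rw [h1, h2, sum_int_Ico_eq_range (fun k => f (z - k)) (-(d:ℤ)) bj]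
      refine Finset.sum_congr rfl fun t _ => ?_
      congr 1
      ring
    have hΔ : ((cnt b (insert j s) (fun _ => True) (x + d) : ℕ) : ℚ)
          * (cnt b (insert j s) (fun _ => True) y : ℕ)
        - ((cnt b (insert j s) (fun _ => True) x : ℕ) : ℚ)
          * (cnt b (insert j s) (fun _ => True) (y + d) : ℕ)
        = ∑ k ∈ K, ∑ l ∈ K, ((c₂ k * c₁ l - c₁ k * c₂ l) * (f (x - k) * f (y - l))) := by
      rw [hg2 x, hg1 y, hg1 x, hg2 y, Finset.sum_mul_sum, Finset.sum_mul_sum]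
      rw [← Finset.sum_sub_distrib]
      refine Finset.sum_congr rfl fun k _ => ?_
      rw [← Finset.sum_sub_distrib]
      refine Finset.sum_congr rfl fun l _ => ?_
      ring
    have hpos : (0:ℚ) ≤ ∑ k ∈ K, ∑ l ∈ K, ((c₂ k * c₁ l - c₁ k * c₂ l) * (f (x - k) * f (y - l))) := by
      rw [pairify K _ (fun k _ => by ring)]
      refine Finset.sum_nonneg fun k hk => Finset.sum_nonneg fun l hl => ?_
      have hkl : k < l := (Finset.mem_filter.mp hl).2
      have heq : (c₂ k * c₁ l - c₁ k * c₂ l) * (f (x - k) * f (y - l))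
            + (c₂ l * c₁ k - c₁ l * c₂ k) * (f (x - l) * f (y - k))
          = (c₂ k * c₁ l - c₁ k * c₂ l) * (f (x - k) * f (y - l) - f (x - l) * f (y - k)) := by
        ring
      rw [heq]
      apply mul_nonneg
      · -- c-factor nonneg
        have hc : c₁ k * c₂ l ≤ c₂ k * c₁ l := by
          simp only [hc₁, hc₂]
          split_ifs <;> norm_num <;> omega
        linarith
      · -- f-factor nonneg via ih
        have := ih (x - l) (y - l) (l - k) (by omega) (by omega)
        have harg1 : y - l + (l - k) = y - k := by ring
        have harg2 : x - l + (l - k) = x - k := by ring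
        rw [harg1, harg2] at this
        linarith
    linarith [hΔ, hpos]
section D
open Finset

lemma cnt_mono {n : ℕ} {b : Fin n → ℕ} {s : Finset (Fin n)}
    {P Q : (Fin n → ℕ) → Prop} (h : ∀ L, P L → Q L) (z : ℤ) :
    cnt b s P z ≤ cnt b s Q z := by
  classical
  apply Finset.card_le_card
  intro L hL
  simp only [cnt, Finset.mem_filter] at *
  exact ⟨hL.1, h _ hL.2.1, hL.2.2⟩

theorem box_main {n : ℕ} (b : Fin n → ℕ) (s : Finset (Fin n)) :
    ∀ (U : (Fin n → ℕ) → Prop), (∀ L L', (∀ i, L i ≤ L' i) → U L → U L') →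
    ∀ z : ℤ, cnt b s U z * cnt b s (fun _ => True) (z+1)
      ≤ cnt b s U (z+1) * cnt b s (fun _ => True) z := by
  classical
  induction s using Finset.induction_on with
  | empty =>
    intro U hU z
    simp only [cnt_empty]
    split_ifs <;> simp_all <;> omega
  | @insert j s hj ih =>
    intro U hU z
    rcases Nat.eq_zero_or_pos (b j) with h0 | hpos
    · have hz : cnt b (insert j s) U z = 0 := by
        rw [cnt_conv hj, h0]; simp
      rw [hz, zero_mul]
      positivity
    obtain ⟨a, ha⟩ : ∃ a, b j = a + 1 := ⟨b j - 1, by omega⟩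
    -- rationals setup
    set f : ℤ → ℚ := fun r => (cnt b s (fun _ => True) r : ℚ) with hf
    set u : ℕ → ℤ → ℚ := fun t r => (cnt b s (fun L => U (Function.update L j t)) r : ℚ) with hu
    have fnn : ∀ r, 0 ≤ f r := fun r => by positivity
    have unn : ∀ t r, 0 ≤ u t r := fun t r => by positivity
    have htp2 : TP2 f := tp2_N b s
    have hIH : ∀ (t : ℕ) (r : ℤ), u t r * f (r+1) ≤ u t (r+1) * f r := by
      intro t r
      have hup : ∀ L L', (∀ i, L i ≤ L' i) → U (Function.update L j t) → U (Function.update L' j t) := by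
        intro L L' hLL hUL
        refine hU _ _ ?_ hUL
        intro i
        by_cases hij : i = j
        · subst hij; simp
        · simp only [Function.update_of_ne hij]; exact hLL i
      have h := ih _ hup r
      have h2 : ((cnt b s (fun L => U (Function.update L j t)) r : ℕ) : ℚ)
            * ((cnt b s (fun _ => True) (r+1) : ℕ) : ℚ)
          ≤ ((cnt b s (fun L => U (Function.update L j t)) (r+1) : ℕ) : ℚ)
            * ((cnt b s (fun _ => True) r : ℕ) : ℚ) := by exact_mod_cast h
      exact h2
    have hnest : ∀ (t : ℕ) (r : ℤ), u t r ≤ u (t+1) r := by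
      intro t r
      have : cnt b s (fun L => U (Function.update L j t)) r
          ≤ cnt b s (fun L => U (Function.update L j (t+1))) r := by
        refine cnt_mono (fun L hL => hU _ _ ?_ hL) r
        intro i
        by_cases hij : i = j
        · subst hij; simp
        · simp [Function.update_of_ne hij]
      exact Nat.cast_le.mpr this
    have hule : ∀ (t : ℕ) (r : ℤ), u t r ≤ f r := by
      intro t r
      exact Nat.cast_le.mpr (cnt_mono (fun L _ => trivial) r)
    have hconvN : ∀ w : ℤ, (cnt b (insert j s) (fun _ => True) w : ℚ)
        = ∑ t ∈ Finset.range (a+1), f (w - t) := by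
      intro w
      rw [cnt_conv hj, ← ha]
      push_cast
      rfl
    have hconvU : ∀ w : ℤ, (cnt b (insert j s) U w : ℚ)
        = ∑ t ∈ Finset.range (a+1), u t (w - t) := by
      intro w
      rw [cnt_conv hj, ← ha]
      push_cast
      rfl
    -- tails
    set T : ℕ → ℚ := fun c => ∑ t ∈ Finset.Ico c (a+1), f (z - t) with hT
    set T' : ℕ → ℚ := fun c => ∑ t ∈ Finset.Ico c (a+1), f (z + 1 - t) with hT'
    have Tnn : ∀ c, 0 ≤ T c := fun c => Finset.sum_nonneg fun t _ => fnn _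
    have T'nn : ∀ c, 0 ≤ T' c := fun c => Finset.sum_nonneg fun t _ => fnn _
    have hTempty : ∀ c, a + 1 ≤ c → T c = 0 := by
      intro c hc
      rw [hT]
      simp [Finset.Ico_eq_empty (by omega : ¬ c < a + 1)]
    have hT'empty : ∀ c, a + 1 ≤ c → T' c = 0 := by
      intro c hc
      rw [hT']
      simp [Finset.Ico_eq_empty (by omega : ¬ c < a + 1)]
    have hTsplit : ∀ c, c ≤ a → T c = f (z - c) + T (c+1) := by
      intro c hc
      rw [hT]
      exact Finset.sum_eq_sum_Ico_succ_bot (by omega) _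
    have hT'split : ∀ c, c ≤ a → T' c = f (z + 1 - c) + T' (c+1) := by
      intro c hc
      rw [hT']
      exact Finset.sum_eq_sum_Ico_succ_bot (by omega) _
    have hTle : ∀ c, T c ≤ T 0 := by
      intro c
      refine Finset.sum_le_sum_of_subset_of_nonneg ?_ (fun t _ _ => fnn _)
      apply Finset.Ico_subset_Ico <;> omega
    -- reindex lemma : T'(c+1) = sum over Ico c a of f(z - t)
    have hreidx : ∀ c : ℕ, T' (c+1) = ∑ t ∈ Finset.Ico c a, f (z - t) := by
      intro c
      show (∑ t ∈ Finset.Ico (c+1) (a+1), f (z + 1 - (t:ℤ))) = ∑ t ∈ Finset.Ico c a, f (z - (t:ℤ))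
      rw [Finset.sum_Ico_eq_sum_range, Finset.sum_Ico_eq_sum_range]
      have : a + 1 - (c + 1) = a - c := by omega
      rw [this]
      refine Finset.sum_congr rfl fun i _ => ?_
      congr 1
      push_cast
      ring
    have hI1 : ∀ c, c ≤ a → T c = T' (c+1) + f (z - a) := by
      intro c hc
      rw [hreidx c]
      show (∑ t ∈ Finset.Ico c (a+1), f (z - (t:ℤ))) = _
      rw [Finset.sum_Ico_succ_top (by omega : c ≤ a)]
    have hZ' : T' 0 = f (z + 1) + (T 0 - f (z - a)) := by
      have h1 : T' 0 = f (z + 1) + T' 1 := by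
        have := hT'split 0 (by omega)
        simpa using this
      have h2 : T 0 = T' 1 + f (z - a) := hI1 0 (by omega)
      rw [h1]
      rw [h2]
      ring
    -- Step 1
    have step1 : ∀ c, T c * T' 0 ≤ T' c * T 0 := by
      intro c
      rcases le_or_gt (a+1) c with hc | hc
      · rw [hTempty c hc, hT'empty c hc, zero_mul, zero_mul]
      · have hsplit0 : T 0 = (∑ t ∈ Finset.Ico 0 c, f (z - t)) + T c :=
          (Finset.sum_Ico_consecutive _ (by omega : 0 ≤ c) (by omega : c ≤ a + 1)).symm
        have hsplit0' : T' 0 = (∑ t ∈ Finset.Ico 0 c, f (z + 1 - t)) + T' c :=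
          (Finset.sum_Ico_consecutive _ (by omega : 0 ≤ c) (by omega : c ≤ a + 1)).symm
        rw [hsplit0, hsplit0']
        have key : T c * (∑ t ∈ Finset.Ico 0 c, f (z + 1 - t))
            ≤ T' c * (∑ t ∈ Finset.Ico 0 c, f (z - t)) := by
          rw [hT, hT', Finset.sum_mul_sum, Finset.sum_mul_sum]
          refine Finset.sum_le_sum fun t ht => Finset.sum_le_sum fun r hr => ?_
          have ht' : c ≤ t := (Finset.mem_Ico.mp ht).1
          have hr' : r < c := (Finset.mem_Ico.mp hr).2
          have := htp2 (z - t) (z - r) 1 (by omega) (by omega)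
          calc f (z - t) * f (z + 1 - r) = f (z - t) * f ((z - r) + 1) := by ring_nf
            _ ≤ f ((z - t) + 1) * f (z - r) := this
            _ = f (z + 1 - t) * f (z - r) := by ring_nf
        nlinarith [mul_nonneg (Tnn c) (T'nn c)]
    -- Step 2
    have step2 : ∀ c, T' (c+1) * T 0 ≤ T c * T' 0 := by
      intro c
      rcases le_or_gt (a+1) c with hc | hc
      · rw [hT'empty (c+1) (by omega), zero_mul]
        exact mul_nonneg (Tnn c) (T'nn 0)
      · have hid : T c * T' 0 - T' (c+1) * T 0
            = T c * f (z + 1) + f (z - a) * (T 0 - T c) := by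
          rw [hZ', hI1 c (by omega)]
          ring
        nlinarith [mul_nonneg (Tnn c) (fnn (z+1)), mul_nonneg (fnn (z - a)) (sub_nonneg.mpr (hTle c))]
    -- masses
    set w1 : ℕ → ℚ := fun c => T c * T' 0 - T' (c+1) * T 0 with hw1def
    set w2 : ℕ → ℚ := fun c => T' (c+1) * T 0 - T (c+1) * T' 0 with hw2def
    have w1nn : ∀ c, 0 ≤ w1 c := fun c => sub_nonneg.mpr (step2 c)
    have w2nn : ∀ c, 0 ≤ w2 c := fun c => sub_nonneg.mpr (step1 (c+1))
    have row : ∀ t, t ≤ a → w1 t + w2 t = f (z - t) * T' 0 := by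
      intro t ht
      have e1 : w1 t = T t * T' 0 - T' (t+1) * T 0 := rfl
      have e2 : w2 t = T' (t+1) * T 0 - T (t+1) * T' 0 := rfl
      rw [e1, e2, hTsplit t ht]
      ring
    have col : ∀ t, t + 1 ≤ a → w2 t + w1 (t+1) = f (z - t) * T 0 := by
      intro t ht
      have e1 : w1 (t+1) = T (t+1) * T' 0 - T' (t+2) * T 0 := rfl
      have e2 : w2 t = T' (t+1) * T 0 - T (t+1) * T' 0 := rfl
      have e3 := hT'split (t+1) (by omega)
      have harg : z + 1 - (↑(t+1):ℤ) = z - t := by push_cast; ring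
      rw [harg] at e3
      rw [e1, e2, e3]
      ring
    have col0 : w1 0 = f (z + 1) * T 0 := by
      have e1 : w1 0 = T 0 * T' 0 - T' 1 * T 0 := rfl
      have h1 : T' 0 = f (z + 1) + T' 1 := by
        have := hT'split 0 (by omega)
        simpa using this
      rw [e1, h1]
      ring
    have w2a : w2 a = 0 := by
      have e2 : w2 a = T' (a+1) * T 0 - T (a+1) * T' 0 := rfl
      rw [e2, hTempty (a+1) (by omega), hT'empty (a+1) (by omega)]
      ring
    -- conditional ratios
    set p : ℕ → ℚ := fun t => u t (z - t) / f (z - t) with hp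
    set q : ℕ → ℚ := fun t => u t (z + 1 - t) / f (z + 1 - t) with hq
    have hpf : ∀ t, u t (z - t) = p t * f (z - t) := by
      intro t
      rw [hp]
      by_cases h : f (z - t) = 0
      · have h1 : u t (z - t) = 0 := le_antisymm (h ▸ hule t (z - t)) (unn t _)
        simp [h, h1]
      · field_simp
    have hqf : ∀ t, u t (z + 1 - t) = q t * f (z + 1 - t) := by
      intro t
      rw [hq]
      by_cases h : f (z + 1 - t) = 0
      · have h1 : u t (z + 1 - t) = 0 := le_antisymm (h ▸ hule t _) (unn t _)
        simp [h, h1]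
      · field_simp
    have qnn : ∀ t, 0 ≤ q t := fun t => div_nonneg (unn _ _) (fnn _)
    -- key termwise inequalities
    have key1 : ∀ t, t ≤ a → p t * w1 t ≤ q t * w1 t := by
      intro t ht
      rcases eq_or_lt_of_le (w1nn t) with h | h
      · rw [← h]; simp
      refine mul_le_mul_of_nonneg_right ?_ (w1nn t)
      -- positivity of denominators
      have hb1 : w1 t ≤ f (z - t) * T' 0 := by
        have := row t ht
        nlinarith [w2nn t]
      have hb2 : w1 t ≤ f (z + 1 - t) * T 0 := by
        have hs1 := step1 t
        have e1 : w1 t = T t * T' 0 - T' (t+1) * T 0 := rfl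
        have hprod : T' t * T 0 = f (z + 1 - t) * T 0 + T' (t+1) * T 0 := by
          rw [hT'split t ht]; ring
        linarith
      have hf1 : 0 < f (z - t) := by
        rcases eq_or_lt_of_le (fnn (z - t)) with h' | h'
        · exfalso; rw [← h', zero_mul] at hb1; linarith
        · exact h'
      have hf2 : 0 < f (z + 1 - t) := by
        rcases eq_or_lt_of_le (fnn (z + 1 - t)) with h' | h'
        · exfalso; rw [← h', zero_mul] at hb2; linarith
        · exact h'
      show u t (z - ↑t) / f (z - ↑t) ≤ u t (z + 1 - ↑t) / f (z + 1 - ↑t)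
      rw [div_le_div_iff₀ hf1 hf2]
      have := hIH t (z - t)
      have harg : (z - t) + 1 = z + 1 - t := by ring
      rw [harg] at this
      linarith
    have key2 : ∀ t, t ≤ a → p t * w2 t ≤ q (t+1) * w2 t := by
      intro t ht
      rcases eq_or_lt_of_le (w2nn t) with h | h
      · rw [← h]; simp
      refine mul_le_mul_of_nonneg_right ?_ (w2nn t)
      have hb1 : w2 t ≤ f (z - t) * T' 0 := by
        have := row t ht
        nlinarith [w1nn t]
      have hf1 : 0 < f (z - t) := by
        rcases eq_or_lt_of_le (fnn (z - t)) with h' | h'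
        · exfalso; rw [← h', zero_mul] at hb1; linarith
        · exact h'
      show u t (z - ↑t) / f (z - ↑t) ≤ u (t+1) (z + 1 - ↑(t+1)) / f (z + 1 - ↑(t+1))
      have harg : z + 1 - (↑(t+1):ℤ) = z - t := by push_cast; ring
      rw [harg, div_le_div_iff₀ hf1 hf1]
      have := hnest t (z - t)
      nlinarith
    -- assemble
    have hLHS : (cnt b (insert j s) U z : ℚ) * (cnt b (insert j s) (fun _ => True) (z+1) : ℚ)
        = ∑ t ∈ Finset.range (a+1), p t * (w1 t + w2 t) := by
      rw [hconvU z, hconvN (z+1), Finset.sum_mul]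
      have hZ'eq : (∑ t ∈ Finset.range (a+1), f (z + 1 - t)) = T' 0 := by
        rw [hT', Finset.range_eq_Ico]
      rw [hZ'eq]
      refine Finset.sum_congr rfl fun t ht => ?_
      have ht' : t ≤ a := by
        have := Finset.mem_range.mp ht
        omega
      rw [row t ht', hpf t]
      ring
    have hRHS : (cnt b (insert j s) U (z+1) : ℚ) * (cnt b (insert j s) (fun _ => True) z : ℚ)
        = (∑ t ∈ Finset.range (a+1), q t * w1 t) + ∑ t ∈ Finset.range a, q (t+1) * w2 t := by
      rw [hconvU (z+1), hconvN z, Finset.sum_mul]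
      have hZeq : (∑ t ∈ Finset.range (a+1), f (z - t)) = T 0 := by
        rw [hT, Finset.range_eq_Ico]
      rw [hZeq]
      have hterm : ∀ t ∈ Finset.range (a+1), u t (z + 1 - t) * T 0 = q t * (f (z + 1 - t) * T 0) := by
        intro t ht
        rw [hqf t]
        ring
      rw [Finset.sum_congr rfl hterm]
      rw [Finset.sum_range_succ' (fun t => q t * (f (z + 1 - t) * T 0)) a]
      have hcolterm : ∀ t ∈ Finset.range a, q (t+1) * (f (z + 1 - (↑(t+1):ℤ)) * T 0)
          = q (t+1) * w2 t + q (t+1) * w1 (t+1) := by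
        intro t ht
        have ht' : t + 1 ≤ a := by
          have := Finset.mem_range.mp ht
          omega
        have harg : z + 1 - (↑(t+1):ℤ) = z - t := by push_cast; ring
        rw [harg, ← col t ht']
        ring
      rw [Finset.sum_congr rfl hcolterm]
      have h0 : q 0 * (f (z + 1 - ((0:ℕ):ℤ)) * T 0) = q 0 * w1 0 := by
        rw [col0]
        norm_num
      rw [h0]
      rw [Finset.sum_add_distrib]
      rw [Finset.sum_range_succ' (fun t => q t * w1 t) a]
      push_cast
      ring
    have main : (cnt b (insert j s) U z : ℚ) * (cnt b (insert j s) (fun _ => True) (z+1) : ℚ)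
        ≤ (cnt b (insert j s) U (z+1) : ℚ) * (cnt b (insert j s) (fun _ => True) z : ℚ) := by
      rw [hLHS, hRHS]
      have hsplit : ∑ t ∈ Finset.range (a+1), p t * (w1 t + w2 t)
          = (∑ t ∈ Finset.range (a+1), p t * w1 t) + ∑ t ∈ Finset.range (a+1), p t * w2 t := by
        rw [← Finset.sum_add_distrib]
        refine Finset.sum_congr rfl fun t _ => by ring
      rw [hsplit]
      have h1 : ∑ t ∈ Finset.range (a+1), p t * w1 t ≤ ∑ t ∈ Finset.range (a+1), q t * w1 t := by
        refine Finset.sum_le_sum fun t ht => key1 t (by have := Finset.mem_range.mp ht; omega)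
      have h2 : ∑ t ∈ Finset.range (a+1), p t * w2 t ≤ ∑ t ∈ Finset.range a, q (t+1) * w2 t := by
        rw [Finset.sum_range_succ]
        have hlast : p a * w2 a = 0 := by rw [w2a]; ring
        rw [hlast, add_zero]
        refine Finset.sum_le_sum fun t ht => key2 t (by have := Finset.mem_range.mp ht; omega)
      linarith
    exact_mod_cast main
end D
section E
open Finset

/-- The Lehmer code of a permutation. -/
def toCode {n : ℕ} (σ : Equiv.Perm (Fin n)) : Fin n → ℕ := fun i =>
  (Finset.univ.filter (fun j => i < j ∧ σ j < σ i)).card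

lemma toCode_lt {n : ℕ} (σ : Equiv.Perm (Fin n)) (i : Fin n) : toCode σ i < n - i := by
  have h1 : (Finset.univ.filter (fun j => i < j ∧ σ j < σ i)).card ≤ (Finset.Ioi i).card := by
    apply Finset.card_le_card
    intro j hj
    simp only [Finset.mem_filter, Finset.mem_Ioi] at *
    exact hj.2.1
  rw [Fin.card_Ioi] at h1
  have := i.isLt
  unfold toCode
  omega

lemma sigma_eq_split {n : ℕ} (σ : Equiv.Perm (Fin n)) (i : Fin n) :
    (σ i : ℕ) = (Finset.univ.filter (fun j => σ j < σ i ∧ j < i)).card + toCode σ i := by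
  classical
  have h1 : (Finset.univ.filter (fun j => σ j < σ i)).card = (σ i : ℕ) := by
    rw [← Fin.card_Iio (σ i)]
    apply Finset.card_bij (fun j _ => σ j)
    · intro j hj
      simp only [Finset.mem_filter, Finset.mem_Iio] at *
      exact hj.2
    · intro j₁ h₁ j₂ h₂ h
      exact σ.injective h
    · intro v hv
      refine ⟨σ.symm v, ?_, by simp⟩
      simp only [Finset.mem_filter, Finset.mem_Iio] at *
      simpa using hv
  have h2 : Finset.univ.filter (fun j => σ j < σ i)
      = (Finset.univ.filter (fun j => σ j < σ i ∧ j < i))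
        ∪ (Finset.univ.filter (fun j => i < j ∧ σ j < σ i)) := by
    ext j
    simp only [Finset.mem_filter, Finset.mem_union, Finset.mem_univ, true_and]
    constructor
    · intro hj
      rcases lt_trichotomy j i with h | h | h
      · exact Or.inl ⟨hj, h⟩
      · exfalso; subst h; exact lt_irrefl _ hj
      · exact Or.inr ⟨h, hj⟩
    · rintro (⟨hj, -⟩ | ⟨-, hj⟩) <;> exact hj
  have h3 : Disjoint (Finset.univ.filter (fun j => σ j < σ i ∧ j < i))
      (Finset.univ.filter (fun j => i < j ∧ σ j < σ i)) := by
    rw [Finset.disjoint_left]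
    intro j hj1 hj2
    simp only [Finset.mem_filter] at hj1 hj2
    exact lt_asymm hj1.2.2 hj2.2.1
  rw [h2, Finset.card_union_of_disjoint h3] at h1
  unfold toCode
  omega

lemma rank_unique {N : ℕ} (S : Finset (Fin N)) (a b : Fin N) (ha : a ∈ S) (hb : b ∈ S)
    (h : (S.filter (fun v => v < a)).card = (S.filter (fun v => v < b)).card) : a = b := by
  classical
  have key : ∀ x y : Fin N, x ∈ S → y ∈ S → x < y →
      (S.filter (fun v => v < x)).card < (S.filter (fun v => v < y)).card := by
    intro x y hx hy hxy
    apply Finset.card_lt_card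
    constructor
    · intro v hv
      rw [Finset.mem_filter] at *
      exact ⟨hv.1, lt_trans hv.2 hxy⟩
    · intro hsub
      have := hsub (Finset.mem_filter.mpr ⟨hx, hxy⟩)
      rw [Finset.mem_filter] at this
      exact lt_irrefl x this.2
  rcases lt_trichotomy a b with hab | hab | hab
  · exact absurd h (Nat.ne_of_lt (key a b ha hb hab))
  · exact hab
  · exact absurd h (Nat.ne_of_gt (key b a hb ha hab))
end E
section F
open Finset

lemma code_rank {n : ℕ} (π : Equiv.Perm (Fin n)) (i : Fin n) :
    ((Finset.univ \ (Finset.univ.filter (fun j => j < i)).image π).filter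
      (fun v => v < π i)).card = toCode π i := by
  classical
  set X := (Finset.univ.filter (fun j => j < i)).image π with hX
  have hd : Disjoint (Finset.univ \ X) X := Finset.sdiff_disjoint
  have hsplit : (Finset.univ.filter (fun v => v < π i)).card
      = ((Finset.univ \ X).filter (fun v => v < π i)).card
        + (X.filter (fun v => v < π i)).card := by
    rw [← Finset.card_union_of_disjoint (Finset.disjoint_filter_filter hd)]
    rw [← Finset.filter_union]
    congr 2
    rw [Finset.sdiff_union_of_subset (Finset.subset_univ X)]
  have h1 : (Finset.univ.filter (fun v => v < π i)).card = (π i : ℕ) := by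
    have : Finset.univ.filter (fun v => v < π i) = Finset.Iio (π i) := by
      ext v
      simp [Finset.mem_Iio]
    rw [this, Fin.card_Iio]
  have h2 : (X.filter (fun v => v < π i)).card
      = (Finset.univ.filter (fun j => π j < π i ∧ j < i)).card := by
    have himg : X.filter (fun v => v < π i)
        = (Finset.univ.filter (fun j => π j < π i ∧ j < i)).image π := by
      ext v
      simp only [hX, Finset.mem_filter, Finset.mem_image, Finset.mem_univ, true_and]
      constructor
      · rintro ⟨⟨j, hj, rfl⟩, hv⟩
        exact ⟨j, ⟨hv, hj⟩, rfl⟩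
      · rintro ⟨j, ⟨hv, hj⟩, rfl⟩
        exact ⟨⟨j, hj, rfl⟩, hv⟩
    rw [himg, Finset.card_image_of_injective _ π.injective]
  have h3 := sigma_eq_split π i
  omega

lemma toCode_injective {n : ℕ} : Function.Injective (toCode (n := n)) := by
  classical
  intro σ τ h
  have key : ∀ k : ℕ, ∀ i : Fin n, (i : ℕ) = k → σ i = τ i := by
    intro k
    induction k using Nat.strong_induction_on with
    | _ k ih =>
      intro i hik
      have hprev : ∀ j : Fin n, j < i → σ j = τ j := by
        intro j hj
        exact ih (j : ℕ) (by exact_mod_cast hik ▸ (Fin.lt_iff_val_lt_val.mp hj)) j rfl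
      have hXeq : (Finset.univ.filter (fun j => j < i)).image σ
          = (Finset.univ.filter (fun j => j < i)).image τ := by
        apply Finset.image_congr
        intro j hj
        simp only [Finset.mem_coe, Finset.mem_filter] at hj
        exact hprev j hj.2
      have hσi : σ i ∈ Finset.univ \ (Finset.univ.filter (fun j => j < i)).image σ := by
        rw [Finset.mem_sdiff]
        refine ⟨Finset.mem_univ _, ?_⟩
        simp only [Finset.mem_image, Finset.mem_filter, Finset.mem_univ, true_and]
        rintro ⟨j, hj, hje⟩
        have := σ.injective hje
        subst this
        exact lt_irrefl _ hj
      have hτi : τ i ∈ Finset.univ \ (Finset.univ.filter (fun j => j < i)).image σ := by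
        rw [Finset.mem_sdiff]
        refine ⟨Finset.mem_univ _, ?_⟩
        rw [hXeq]
        simp only [Finset.mem_image, Finset.mem_filter, Finset.mem_univ, true_and]
        rintro ⟨j, hj, hje⟩
        have := τ.injective hje
        subst this
        exact lt_irrefl _ hj
      have hr1 := code_rank σ i
      have hr2 := code_rank τ i
      rw [← hXeq] at hr2
      apply rank_unique (Finset.univ \ (Finset.univ.filter (fun j => j < i)).image σ) (σ i) (τ i) hσi hτi
      rw [hr1, hr2, h]
  exact Equiv.ext (fun i => key (i : ℕ) i rfl)
end F
section G
open Finset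

lemma prod_fin_factorial : ∀ n : ℕ, (∏ i : Fin n, (n - (i:ℕ))) = n.factorial := by
  intro n
  induction n with
  | zero => simp
  | succ n ih =>
    rw [Fin.prod_univ_succ]
    have h1 : ∀ i : Fin n, (n + 1) - ((i.succ : Fin (n+1)) : ℕ) = n - (i : ℕ) := by
      intro i
      rw [Fin.val_succ]
      omega
    rw [Finset.prod_congr rfl (fun i _ => h1 i), ih]
    simp [Nat.factorial_succ]

lemma boxF_univ_card (n : ℕ) :
    (boxF (fun i : Fin n => n - (i:ℕ)) Finset.univ).card = n.factorial := by
  classical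
  unfold boxF
  rw [Fintype.card_piFinset]
  rw [← prod_fin_factorial n]
  refine Finset.prod_congr rfl fun i _ => ?_
  simp

lemma toCode_mem_boxF {n : ℕ} (σ : Equiv.Perm (Fin n)) :
    toCode σ ∈ boxF (fun i : Fin n => n - (i:ℕ)) Finset.univ := by
  rw [mem_boxF]
  intro i
  exact ⟨fun _ => toCode_lt σ i, fun h => absurd (Finset.mem_univ i) h⟩

lemma image_toCode_eq (n : ℕ) :
    Finset.univ.image (toCode (n := n)) = boxF (fun i : Fin n => n - (i:ℕ)) Finset.univ := by
  classical
  apply Finset.eq_of_subset_of_card_le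
  · intro L hL
    obtain ⟨σ, -, rfl⟩ := Finset.mem_image.mp hL
    exact toCode_mem_boxF σ
  · rw [boxF_univ_card, Finset.card_image_of_injective _ toCode_injective,
      Finset.card_univ, Fintype.card_perm, Fintype.card_fin]

open scoped Classical in
lemma count_transfer {n : ℕ} (P : (Fin n → ℕ) → Prop) :
    (Finset.univ.filter (fun σ : Equiv.Perm (Fin n) => P (toCode σ))).card
      = ((boxF (fun i : Fin n => n - (i:ℕ)) Finset.univ).filter P).card := by
  classical
  rw [← image_toCode_eq, Finset.filter_image,
    Finset.card_image_of_injective _ toCode_injective]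

lemma invCount_eq {n : ℕ} (σ : Equiv.Perm (Fin n)) : invCount σ = ∑ i, toCode σ i := by
  classical
  unfold invCount
  rw [Finset.card_eq_sum_card_fiberwise (f := fun p => p.1) (t := Finset.univ)
    (fun x _ => Finset.mem_univ _)]
  refine Finset.sum_congr rfl fun i _ => ?_
  apply Finset.card_bij (fun p _ => p.2)
  · intro p hp
    simp only [Finset.mem_filter, Finset.mem_univ, true_and] at *
    obtain ⟨⟨h1, h2⟩, h3⟩ := hp
    subst h3
    exact ⟨h1, h2⟩
  · intro p₁ h₁ p₂ h₂ hp
    simp only [Finset.mem_filter] at h₁ h₂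
    have := h₁.2
    have := h₂.2
    ext
    · rw [h₁.2, h₂.2]
    · rw [hp]
  · intro j hj
    simp only [Finset.mem_filter, Finset.mem_univ, true_and] at hj
    exact ⟨(i, j), by simp [hj.1, hj.2], rfl⟩
end G
section H
open Finset

lemma decompAt {n : ℕ} (σ : Equiv.Perm (Fin n)) (k : ℕ) (_hk0 : 0 < k) (hkn : k < n) :
    (∀ i : Fin n, (i:ℕ) < k → (σ i : ℕ) < k)
      ↔ (∀ i : Fin n, (i:ℕ) < k → toCode σ i + (i:ℕ) < k) := by
  classical
  constructor
  · intro H i hi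
    have himg : (Finset.univ.filter (fun j : Fin n => (j:ℕ) < k)).image σ
        = Finset.univ.filter (fun j : Fin n => (j:ℕ) < k) := by
      apply Finset.eq_of_subset_of_card_le
      · intro v hv
        obtain ⟨j, hj, rfl⟩ := Finset.mem_image.mp hv
        simp only [Finset.mem_filter, Finset.mem_univ, true_and] at *
        exact H j hj
      · rw [Finset.card_image_of_injective _ σ.injective]
    have hout : ∀ j : Fin n, ¬((j:ℕ) < k) → ¬((σ j : ℕ) < k) := by
      intro j hj hσj
      have hmem : σ j ∈ Finset.univ.filter (fun j : Fin n => (j:ℕ) < k) :=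
        Finset.mem_filter.mpr ⟨Finset.mem_univ _, hσj⟩
      rw [← himg] at hmem
      obtain ⟨j', hj', hje⟩ := Finset.mem_image.mp hmem
      have := σ.injective hje
      subst this
      exact hj (Finset.mem_filter.mp hj').2
    have hsub : Finset.univ.filter (fun j => i < j ∧ σ j < σ i)
        ⊆ Finset.univ.filter (fun j : Fin n => i < j ∧ (j:ℕ) < k) := by
      intro j hj
      simp only [Finset.mem_filter, Finset.mem_univ, true_and] at *
      refine ⟨hj.1, ?_⟩
      by_contra hc
      apply hout j hc
      have h1 : (σ j : ℕ) < (σ i : ℕ) := hj.2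
      have h2 : (σ i : ℕ) < k := H i hi
      omega
    have hcard : (Finset.univ.filter (fun j : Fin n => i < j ∧ (j:ℕ) < k)).card
        ≤ k - 1 - (i:ℕ) := by
      have hinj : ∀ j₁ ∈ Finset.univ.filter (fun j : Fin n => i < j ∧ (j:ℕ) < k),
          ∀ j₂ ∈ Finset.univ.filter (fun j : Fin n => i < j ∧ (j:ℕ) < k),
          (j₁:ℕ) = (j₂:ℕ) → j₁ = j₂ := by
        intro j₁ _ j₂ _ h
        exact Fin.ext h
      have hmap : ∀ j ∈ Finset.univ.filter (fun j : Fin n => i < j ∧ (j:ℕ) < k),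
          (fun j : Fin n => (j:ℕ)) j ∈ Finset.Ioo (i:ℕ) k := by
        intro j hj
        simp only [Finset.mem_filter, Finset.mem_univ, true_and] at hj
        rw [Finset.mem_Ioo]
        exact ⟨hj.1, hj.2⟩
      have := Finset.card_le_card_of_injOn (fun j : Fin n => (j:ℕ)) hmap
        (fun j₁ _ j₂ _ h => Fin.ext h)
      rw [Nat.card_Ioo] at this
      omega
    have hle : toCode σ i ≤ k - 1 - (i:ℕ) := le_trans (Finset.card_le_card hsub) hcard
    omega
  · intro H i hi
    have h2 := sigma_eq_split σ i
    have h3 : (Finset.univ.filter (fun j => σ j < σ i ∧ j < i)).card ≤ (i:ℕ) := by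
      calc (Finset.univ.filter (fun j => σ j < σ i ∧ j < i)).card
          ≤ (Finset.Iio i).card := by
            apply Finset.card_le_card
            intro j hj
            simp only [Finset.mem_filter, Finset.mem_Iio] at *
            exact hj.2.2
        _ = (i:ℕ) := Fin.card_Iio i
    have := H i hi
    omega

def codeU (n : ℕ) : (Fin n → ℕ) → Prop := fun L =>
  ∀ k : ℕ, 0 < k → k < n → ∃ i : Fin n, (i:ℕ) < k ∧ k ≤ L i + (i:ℕ)

lemma codeU_upclosed (n : ℕ) : ∀ L L' : Fin n → ℕ,
    (∀ i, L i ≤ L' i) → codeU n L → codeU n L' := by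
  intro L L' hLL h k hk0 hkn
  obtain ⟨i, hi, hki⟩ := h k hk0 hkn
  exact ⟨i, hi, le_trans hki (by have := hLL i; omega)⟩

lemma indec_iff {n : ℕ} (σ : Equiv.Perm (Fin n)) :
    Indecomposable σ ↔ codeU n (toCode σ) := by
  unfold Indecomposable codeU
  constructor
  · intro h k hk0 hkn
    have hnot : ¬ ∀ i : Fin n, (i:ℕ) < k → (σ i:ℕ) < k := fun hall => h ⟨k, hk0, hkn, hall⟩
    rw [decompAt σ k hk0 hkn] at hnot
    push_neg at hnot
    obtain ⟨i, hi, hle⟩ := hnot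
    exact ⟨i, hi, hle⟩
  · rintro h ⟨k, hk0, hkn, hall⟩
    obtain ⟨i, hi, hki⟩ := h k hk0 hkn
    rw [decompAt σ k hk0 hkn] at hall
    have := hall i hi
    omega

open scoped Classical in
lemma count_transfer' {n : ℕ} (P : (Fin n → ℕ) → Prop) (z : ℤ) :
    (Finset.univ.filter (fun σ : Equiv.Perm (Fin n) =>
        P (toCode σ) ∧ (∑ i, ((toCode σ) i : ℤ)) = z)).card
      = cnt (fun i : Fin n => n - (i:ℕ)) Finset.univ P z := by
  classical
  unfold cnt
  rw [← image_toCode_eq, Finset.filter_image,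
    Finset.card_image_of_injective _ toCode_injective]

open scoped Classical in
lemma nat_card_eq {n m : ℕ} :
    Nat.card {σ : Equiv.Perm (Fin n) // Indecomposable σ ∧ invCount σ = m}
      = cnt (fun i : Fin n => n - (i:ℕ)) Finset.univ (codeU n) (m : ℤ) := by
  classical
  rw [Nat.card_eq_fintype_card, Fintype.card_subtype]
  rw [← count_transfer' (codeU n) (m : ℤ)]
  congr 1
  apply Finset.filter_congr
  intro σ _
  rw [indec_iff, invCount_eq]
  constructor
  · rintro ⟨h1, h2⟩
    exact ⟨h1, by exact_mod_cast congrArg (Nat.cast : ℕ → ℤ) h2⟩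
  · rintro ⟨h1, h2⟩
    exact ⟨h1, by exact_mod_cast h2⟩

open scoped Classical in
lemma s_eq {n m : ℕ} :
    s n m = cnt (fun i : Fin n => n - (i:ℕ)) Finset.univ (fun _ => True) (m : ℤ) := by
  classical
  unfold s
  rw [← count_transfer' (fun _ => True) (m : ℤ)]
  congr 1
  ext σ
  simp only [Finset.mem_filter, Finset.mem_univ, true_and]
  rw [invCount_eq]
  exact ⟨fun h2 => by exact_mod_cast h2, fun h2 => by exact_mod_cast h2⟩

/-- Monotonicity: the probability that a uniformly random permutation of `[n]` with `m`
inversions is indecomposable is at most that for `m+1` inversions.  Equivalently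
(cross-multiplying the two probabilities):
`#\{indecomposable with m inversions\}·s(n,m+1) ≤ #\{indecomposable with m+1 inversions\}·s(n,m)`. -/
theorem indecomposable_probability_monotone (n m : ℕ) (hm : m < n.choose 2) :
    Nat.card {σ : Equiv.Perm (Fin n) // Indecomposable σ ∧ invCount σ = m} * s n (m + 1)
      ≤ Nat.card {σ : Equiv.Perm (Fin n) // Indecomposable σ ∧ invCount σ = m + 1} * s n m := by
  classical
  rw [nat_card_eq, nat_card_eq, s_eq, s_eq]
  have hcast : ((m + 1 : ℕ) : ℤ) = (m : ℤ) + 1 := by push_cast; ring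
  rw [hcast]
  exact box_main (fun i : Fin n => n - (i:ℕ)) Finset.univ (codeU n) (codeU_upclosed n) (m : ℤ)
end H
end
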